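/- arXiv:1712.06907 — 6 statements merged into one kernel-verified Lean document; each statement's English description precedes it below -/
import Mathlib

section
/- The quasi-cyclic code Q_q(f,g,h) has dimension 2n - deg(f(x)) - deg(g(x)) as an F_q-linear subspace of F_q^{2n}. -/
open Polynomial Finset

noncomputable section

variable {F : Type*} [Field F] [DecidableEq F]

/-- The vector in `F^n` corresponding to the residue class of a polynomial
in `F[x]/(x^n-1)`: the coefficients of its canonical representative of degree `< n`. -/
def vecOf (n : ℕ) : F[X] →ₗ[F] (Fin n → F) where
  toFun a := fun i => (a %ₘ (X ^ n - 1)).coeff i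
  map_add' a b := by
    funext i
    simp [Polynomial.add_modByMonic]
  map_smul' c a := by
    funext i
    simp [Polynomial.smul_modByMonic]

/-- The quasi-cyclic code `Q_q(f,g,h)`: the `F`-subspace of `F^n × F^n ≃ F^{2n}`
corresponding to the `R`-submodule of `R²` generated by `([f],[h f])` and `(0,[g])`. -/
def QCcode (n : ℕ) (f g h : F[X]) : Submodule F ((Fin n → F) × (Fin n → F)) where
  carrier := {v | ∃ a b : F[X], v = (vecOf n (a * f), vecOf n (a * h * f + b * g))}
  zero_mem' := ⟨0, 0, by simp; rfl⟩
  add_mem' := by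
    rintro v w ⟨a1, b1, rfl⟩ ⟨a2, b2, rfl⟩
    refine ⟨a1 + a2, b1 + b2, ?_⟩
    have h1 : (a1 + a2) * f = a1 * f + a2 * f := by ring
    have h2 : (a1 + a2) * h * f + (b1 + b2) * g
        = (a1 * h * f + b1 * g) + (a2 * h * f + b2 * g) := by ring
    rw [h1, h2, map_add (vecOf n) (a1 * f) (a2 * f),
      map_add (vecOf n) (a1 * h * f + b1 * g) (a2 * h * f + b2 * g)]
    rfl
  smul_mem' := by
    rintro c v ⟨a, b, rfl⟩
    refine ⟨c • a, c • b, ?_⟩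
    have h1 : (c • a) * f = c • (a * f) := smul_mul_assoc c a f
    have h2 : (c • a) * h * f + (c • b) * g = c • (a * h * f + b * g) := by
      rw [smul_add, smul_mul_assoc, smul_mul_assoc, smul_mul_assoc]
    rw [h1, h2, map_smul, map_smul]
    rfl

/-- Hamming weight of a vector. -/
def hWt {n : ℕ} (x : Fin n → F) : ℕ := Nat.card {i : Fin n // x i ≠ 0}

/-- Hamming weight of a vector of `F^{2n}` presented as a pair. -/
def hWt2 {n : ℕ} (v : (Fin n → F) × (Fin n → F)) : ℕ := hWt v.1 + hWt v.2

/-- Symplectic weight. -/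
def sWt {n : ℕ} (v : (Fin n → F) × (Fin n → F)) : ℕ :=
  Nat.card {i : Fin n // (v.1 i, v.2 i) ≠ (0, 0)}

/-- Euclidean inner product on `F^n`. -/
def eInn {n : ℕ} (x y : Fin n → F) : F := ∑ i, x i * y i

/-- Euclidean inner product on `F^{2n}`. -/
def eInn2 {n : ℕ} (x y : (Fin n → F) × (Fin n → F)) : F := eInn x.1 y.1 + eInn x.2 y.2

/-- Symplectic inner product on `F^{2n}`. -/
def sInn {n : ℕ} (x y : (Fin n → F) × (Fin n → F)) : F :=
  ∑ i, (x.1 i * y.2 i - x.2 i * y.1 i)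

/-- Hermitian inner product on `F^{2n}` (with respect to `x ↦ x^q`). -/
def hInn2 (q : ℕ) {n : ℕ} (x y : (Fin n → F) × (Fin n → F)) : F :=
  (∑ i, x.1 i ^ q * y.1 i) + ∑ i, x.2 i ^ q * y.2 i

def sDualSet {n : ℕ} (C : Set ((Fin n → F) × (Fin n → F))) : Set ((Fin n → F) × (Fin n → F)) :=
  {x | ∀ y ∈ C, sInn x y = 0}

def eDualSet {n : ℕ} (C : Set ((Fin n → F) × (Fin n → F))) : Set ((Fin n → F) × (Fin n → F)) :=
  {x | ∀ y ∈ C, eInn2 x y = 0}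

def hDualSet (q : ℕ) {n : ℕ} (C : Set ((Fin n → F) × (Fin n → F))) :
    Set ((Fin n → F) × (Fin n → F)) :=
  {x | ∀ y ∈ C, hInn2 q x y = 0}

/-- `x^n f(1/x)` for `f` of degree `< n`. -/
def barPoly (n : ℕ) (f : F[X]) : F[X] := ∑ i ∈ f.support, C (f.coeff i) * X ^ (n - i)

/-- `f^⊥ = x^{deg f'} f'(1/x)` where `f f' = x^n - 1`. -/
def perpPoly (n : ℕ) (f : F[X]) : F[X] := ((X ^ n - 1) /ₘ f).reverse

/-- coefficientwise `q`-th power. -/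
def polyQ (q : ℕ) (f : F[X]) : F[X] := ∑ i ∈ f.support, C (f.coeff i ^ q) * X ^ i

/-- minimum Hamming weight of the cyclic code generated by `[u]`. -/
def cycDist (n : ℕ) (u : F[X]) : ℕ :=
  sInf {w | ∃ a : F[X], vecOf n (a * u) ≠ 0 ∧ w = hWt (vecOf n (a * u))}

/-- The general QC set generated by `([u₁],[v₁])` and `([u₂],[v₂])`. -/
def QCspan (n : ℕ) (u₁ v₁ u₂ v₂ : F[X]) : Set ((Fin n → F) × (Fin n → F)) :=
  {w | ∃ a b : F[X], w = (vecOf n (a * u₁ + b * u₂), vecOf n (a * v₁ + b * v₂))}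

/-- The lower bound `d_q(f,g,h)` for the symplectic weight (a rational number). -/
def dSymp (q n : ℕ) (f g h : F[X]) : ℚ :=
  min (min (min (cycDist n g : ℚ)
    (cycDist n ((X ^ n - 1) / GCDMonoid.gcd (X ^ n - 1) h) : ℚ))
    (cycDist n (GCDMonoid.lcm f (g / GCDMonoid.gcd g h)) : ℚ))
    ((cycDist n f + cycDist n (GCDMonoid.gcd (h * f) g) + ((q : ℚ) - 1) * cycDist n (GCDMonoid.gcd f g)) / q)

/-- The lower bound `d_q^e(f,g,h)` for the minimum distance. -/
def dEucl (n : ℕ) (f g h : F[X]) : ℕ :=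
  min (min (min (cycDist n g)
    (cycDist n ((X ^ n - 1) / GCDMonoid.gcd (X ^ n - 1) h)))
    (cycDist n (GCDMonoid.lcm f (g / GCDMonoid.gcd g h))))
    (cycDist n f + cycDist n (GCDMonoid.gcd (h * f) g))

lemma monicXn (n : ℕ) (hn : 0 < n) : (X ^ n - 1 : F[X]).Monic := by
  simpa using monic_X_pow_sub_C (1 : F) hn.ne'

lemma degXn (n : ℕ) (hn : 0 < n) : (X ^ n - 1 : F[X]).degree = n := by
  simpa using degree_X_pow_sub_C hn (1 : F)

lemma natDegXn (n : ℕ) (hn : 0 < n) : (X ^ n - 1 : F[X]).natDegree = n := by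
  have := degXn (F := F) n hn
  exact natDegree_eq_of_degree_eq_some this

@[simp] lemma vecOf_apply (n : ℕ) (p : F[X]) (i : Fin n) :
    vecOf n p i = (p %ₘ (X ^ n - 1)).coeff i := rfl

lemma vecOf_eq_zero_iff {n : ℕ} (hn : 0 < n) (p : F[X]) :
    vecOf n p = 0 ↔ (X ^ n - 1 : F[X]) ∣ p := by
  rw [← modByMonic_eq_zero_iff_dvd (monicXn n hn)]
  constructor
  · intro h0
    ext i
    by_cases hi : i < n
    · simpa using congrFun h0 ⟨i, hi⟩
    · refine coeff_eq_zero_of_degree_lt ?_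
      refine lt_of_lt_of_le (degree_modByMonic_lt p (monicXn n hn)) ?_
      rw [degXn n hn]
      exact_mod_cast Nat.le_of_not_lt hi
  · intro h0
    funext i
    simp [h0]

lemma vecOf_eq_of_dvd {n : ℕ} (hn : 0 < n) {p q : F[X]}
    (hd : (X ^ n - 1 : F[X]) ∣ (p - q)) : vecOf n p = vecOf n q := by
  have := (vecOf_eq_zero_iff hn (p - q)).2 hd
  rw [map_sub, sub_eq_zero] at this
  exact this

/-- The parametrizing linear map for the QC code. -/
def Lmap (n : ℕ) (f g h : F[X]) :
    (Polynomial.degreeLT F (n - f.natDegree) × Polynomial.degreeLT F (n - g.natDegree)) →ₗ[F]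
      ((Fin n → F) × (Fin n → F)) where
  toFun p := (vecOf n (p.1.1 * f), vecOf n (p.1.1 * h * f + p.2.1 * g))
  map_add' p q := by
    have e1 : ((p.1 + q.1 : Polynomial.degreeLT F (n - f.natDegree)) : F[X]) * f
        = (p.1 : F[X]) * f + (q.1 : F[X]) * f := by
      rw [Submodule.coe_add]; ring
    have e2 : ((p.1 + q.1 : Polynomial.degreeLT F (n - f.natDegree)) : F[X]) * h * f
          + ((p.2 + q.2 : Polynomial.degreeLT F (n - g.natDegree)) : F[X]) * g
        = ((p.1 : F[X]) * h * f + (p.2 : F[X]) * g)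
          + ((q.1 : F[X]) * h * f + (q.2 : F[X]) * g) := by
      rw [Submodule.coe_add, Submodule.coe_add]; ring
    show (vecOf n ((p + q).1.1 * f), vecOf n ((p + q).1.1 * h * f + (p + q).2.1 * g)) = _
    simp only [Prod.fst_add, Prod.snd_add]
    rw [e1, e2, map_add, map_add]
    rfl
  map_smul' c p := by
    have e1 : ((c • p.1 : Polynomial.degreeLT F (n - f.natDegree)) : F[X]) * f
        = c • ((p.1 : F[X]) * f) := by
      rw [Submodule.coe_smul, smul_mul_assoc]
    have e2 : ((c • p.1 : Polynomial.degreeLT F (n - f.natDegree)) : F[X]) * h * f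
          + ((c • p.2 : Polynomial.degreeLT F (n - g.natDegree)) : F[X]) * g
        = c • ((p.1 : F[X]) * h * f + (p.2 : F[X]) * g) := by
      rw [Submodule.coe_smul, Submodule.coe_smul, smul_add, smul_mul_assoc, smul_mul_assoc,
        smul_mul_assoc]
    show (vecOf n ((c • p).1.1 * f), vecOf n ((c • p).1.1 * h * f + (c • p).2.1 * g)) = _
    simp only [Prod.smul_fst, Prod.smul_snd]
    rw [e1, e2, map_smul, map_smul]
    rfl

/-- the QC code `Q_q(f,g,h)` has dimension `2n - deg f - deg g`. -/
theorem stmt2 [Fintype F] (n : ℕ) (hn : 0 < n) (f g h : F[X])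
    (hf : f.Monic) (hg : g.Monic) (hh : h.Monic)
    (hfd : f.degree < n) (hgd : g.degree < n) (hhd : h.degree < n)
    (hfdvd : f ∣ X ^ n - 1) (hgdvd : g ∣ X ^ n - 1) :
    Module.finrank F (QCcode n f g h) = 2 * n - f.natDegree - g.natDegree := by
  have hfne : f ≠ 0 := hf.ne_zero
  have hgne : g ≠ 0 := hg.ne_zero
  have hdfn : f.natDegree < n := (natDegree_lt_iff_degree_lt hfne).2 hfd
  have hdgn : g.natDegree < n := (natDegree_lt_iff_degree_lt hgne).2 hgd
  obtain ⟨f', hff'⟩ := hfdvd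
  obtain ⟨g', hgg'⟩ := hgdvd
  have hf'm : f'.Monic := hf.of_mul_monic_left (hff' ▸ monicXn n hn)
  have hg'm : g'.Monic := hg.of_mul_monic_left (hgg' ▸ monicXn n hn)
  have hdf' : f'.natDegree = n - f.natDegree := by
    have : (X ^ n - 1 : F[X]).natDegree = f.natDegree + f'.natDegree := by
      rw [hff', natDegree_mul hfne hf'm.ne_zero]
    rw [natDegXn n hn] at this
    omega
  have hdg' : g'.natDegree = n - g.natDegree := by
    have : (X ^ n - 1 : F[X]).natDegree = g.natDegree + g'.natDegree := by
      rw [hgg', natDegree_mul hgne hg'm.ne_zero]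
    rw [natDegXn n hn] at this
    omega
  -- injectivity
  have hinj : Function.Injective (Lmap n f g h) := by
    rw [← LinearMap.ker_eq_bot]
    refine (Submodule.eq_bot_iff _).2 ?_
    rintro ⟨a, b⟩ hab
    rw [LinearMap.mem_ker] at hab
    have h1 : vecOf n ((a : F[X]) * f) = 0 := congrArg Prod.fst hab
    have h2 : vecOf n ((a : F[X]) * h * f + (b : F[X]) * g) = 0 := congrArg Prod.snd hab
    have hsmall : ∀ (u v : F[X]), u.Monic → u.natDegree < n →
        ∀ (c : F[X]), c ∈ Polynomial.degreeLT F (n - u.natDegree) →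
        (X ^ n - 1 : F[X]) ∣ c * u → c = 0 := by
      intro u v hu hun c hc hdvd
      by_contra hc0
      have hcu : c * u ≠ 0 := mul_ne_zero hc0 hu.ne_zero
      have hdeg : (c * u).degree < (X ^ n - 1 : F[X]).degree := by
        rw [degXn n hn, ← natDegree_lt_iff_degree_lt hcu, natDegree_mul hc0 hu.ne_zero]
        have : c.natDegree < n - u.natDegree := by
          rw [natDegree_lt_iff_degree_lt hc0]
          exact_mod_cast Polynomial.mem_degreeLT.1 hc
        omega
      exact hcu (eq_zero_of_dvd_of_degree_lt hdvd hdeg)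
    have ha0 : (a : F[X]) = 0 := by
      by_cases ha : (a : F[X]) = 0
      · exact ha
      · exact hsmall f f hf hdfn a a.2 ((vecOf_eq_zero_iff hn _).1 h1)
    have hb0 : (b : F[X]) = 0 := by
      have h2' : vecOf n ((b : F[X]) * g) = 0 := by
        have : (b : F[X]) * g = (a : F[X]) * h * f + (b : F[X]) * g := by
          rw [ha0]; ring
        rw [this]; exact h2
      exact hsmall g g hg hdgn b b.2 ((vecOf_eq_zero_iff hn _).1 h2')
    refine Prod.ext ?_ ?_ <;> simp [Subtype.ext_iff, ha0, hb0]
  -- range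
  have hrange : LinearMap.range (Lmap n f g h) = QCcode n f g h := by
    ext v
    constructor
    · rintro ⟨⟨a, b⟩, rfl⟩
      exact ⟨a.1, b.1, rfl⟩
    · rintro ⟨a, b, rfl⟩
      have hma := modByMonic_eq_sub_mul_div a f'
      have hmb := modByMonic_eq_sub_mul_div b g'
      have hamem : a %ₘ f' ∈ Polynomial.degreeLT F (n - f.natDegree) := by
        rw [Polynomial.mem_degreeLT, ← hdf',
          ← degree_eq_natDegree hf'm.ne_zero]
        exact degree_modByMonic_lt a hf'm
      have hbmem : b %ₘ g' ∈ Polynomial.degreeLT F (n - g.natDegree) := by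
        rw [Polynomial.mem_degreeLT, ← hdg',
          ← degree_eq_natDegree hg'm.ne_zero]
        exact degree_modByMonic_lt b hg'm
      refine ⟨⟨⟨a %ₘ f', hamem⟩, ⟨b %ₘ g', hbmem⟩⟩, ?_⟩
      show (vecOf n ((a %ₘ f') * f), vecOf n ((a %ₘ f') * h * f + (b %ₘ g') * g)) = _
      refine Prod.ext ?_ ?_
      · refine vecOf_eq_of_dvd hn ?_
        refine ⟨-(a /ₘ f'), ?_⟩
        rw [hma, hff']; ring
      · refine vecOf_eq_of_dvd hn ?_
        have key : (a %ₘ f') * h * f + (b %ₘ g') * g - ((a : F[X]) * h * f + b * g)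
            = f * f' * (-(a /ₘ f') * h) + g * g' * (-(b /ₘ g')) := by
          rw [hma, hmb]; ring
        rw [key, ← hff', ← hgg']
        exact dvd_add (Dvd.intro _ rfl) (Dvd.intro _ rfl)
  -- conclusion
  have : Module.Finite F (Polynomial.degreeLT F (n - f.natDegree)) :=
    Module.Finite.equiv (Polynomial.degreeLTEquiv F (n - f.natDegree)).symm
  have : Module.Finite F (Polynomial.degreeLT F (n - g.natDegree)) :=
    Module.Finite.equiv (Polynomial.degreeLTEquiv F (n - g.natDegree)).symm
  have heq := LinearEquiv.finrank_eq (LinearEquiv.ofInjective (Lmap n f g h) hinj)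
  rw [hrange] at heq
  rw [← heq, Module.finrank_prod,
    LinearEquiv.finrank_eq (Polynomial.degreeLTEquiv F (n - f.natDegree)),
    LinearEquiv.finrank_eq (Polynomial.degreeLTEquiv F (n - g.natDegree)),
    Module.finrank_fin_fun, Module.finrank_fin_fun]
  omega

end
end

section
/- The symplectic dual Q_q(f,g,h)^{perp_s} of the quasi-cyclic code Q_q(f,g,h) equals the quasi-cyclic code of length 2n corresponding to the R-submodule of R^2 generated by ([g^perp(x)], [hbar(x) g^perp(x)]) and (0, [f^perp(x)]). -/
open Polynomial Finset

noncomputable section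

variable {F : Type*} [Field F] [DecidableEq F]

namespace Stmt3Aux

open AdjoinRoot

lemma monic_m {n : ℕ} (hn : 0 < n) : ((X : F[X]) ^ n - 1).Monic := by
  simpa using Polynomial.monic_X_pow_sub_C (1 : F) hn.ne'

lemma degree_m {n : ℕ} (hn : 0 < n) : ((X : F[X]) ^ n - 1).degree = n := by
  simpa using Polynomial.degree_X_pow_sub_C hn (1 : F)

lemma natDegree_mod_lt {n : ℕ} (hn : 0 < n) (P : F[X]) :
    (P %ₘ ((X : F[X]) ^ n - 1)).natDegree < n := by
  by_cases h0 : P %ₘ ((X : F[X]) ^ n - 1) = 0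
  · simpa [h0] using hn
  · rw [Polynomial.natDegree_lt_iff_degree_lt h0]
    have := Polynomial.degree_modByMonic_lt P (monic_m hn)
    rwa [degree_m hn] at this

lemma dvd_sub_mod {n : ℕ} (hn : 0 < n) (P : F[X]) :
    ((X : F[X]) ^ n - 1) ∣ P - P %ₘ ((X : F[X]) ^ n - 1) :=
  ⟨P /ₘ ((X : F[X]) ^ n - 1), by
    have h := Polynomial.modByMonic_add_div P ((X : F[X]) ^ n - 1)
    linear_combination -h⟩

lemma vecOf_apply {n : ℕ} (P : F[X]) (i : Fin n) :
    vecOf n P i = (P %ₘ ((X : F[X]) ^ n - 1)).coeff i := rfl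

lemma vecOf_eq_of_dvd {n : ℕ} (hn : 0 < n) {P Q : F[X]}
    (hd : ((X : F[X]) ^ n - 1) ∣ P - Q) : vecOf n P = vecOf n Q := by
  have h0 : (P - Q) %ₘ ((X : F[X]) ^ n - 1) = 0 :=
    (Polynomial.modByMonic_eq_zero_iff_dvd (monic_m hn)).mpr hd
  rw [Polynomial.sub_modByMonic, sub_eq_zero] at h0
  funext i
  rw [vecOf_apply, vecOf_apply, h0]

lemma vecOf_poly {n : ℕ} (hn : 0 < n) (x : Fin n → F) :
    vecOf n (∑ i : Fin n, C (x i) * X ^ (i : ℕ)) = x := by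
  have hdeg : (∑ i : Fin n, C (x i) * X ^ (i : ℕ)).degree < ((X : F[X]) ^ n - 1).degree := by
    rw [degree_m hn]
    refine lt_of_le_of_lt (Polynomial.degree_sum_le _ _) ?_
    rw [Finset.sup_lt_iff (by exact_mod_cast WithBot.bot_lt_coe n)]
    intro i _
    exact lt_of_le_of_lt (Polynomial.degree_C_mul_X_pow_le _ _) (by exact_mod_cast i.isLt)
  have hmod : (∑ i : Fin n, C (x i) * X ^ (i : ℕ)) %ₘ ((X : F[X]) ^ n - 1)
      = ∑ i : Fin n, C (x i) * X ^ (i : ℕ) :=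
    (Polynomial.modByMonic_eq_self_iff (monic_m hn)).mpr hdeg
  funext k
  rw [vecOf_apply, hmod, Polynomial.finset_sum_coeff]
  simp only [Polynomial.coeff_C_mul, Polynomial.coeff_X_pow, mul_ite, mul_one, mul_zero]
  rw [Finset.sum_eq_single k]
  · simp
  · intro j _ hne
    rw [if_neg (fun hc => hne (Fin.val_inj.mp hc.symm))]
  · intro hk
    exact absurd (Finset.mem_univ k) hk

lemma root_pow_n (n : ℕ) : (root ((X : F[X]) ^ n - 1)) ^ n = 1 := by
  have h : mk ((X : F[X]) ^ n - 1) ((X : F[X]) ^ n - 1) = 0 := mk_self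
  rw [map_sub, map_pow, map_one, mk_X, sub_eq_zero] at h
  exact h

lemma root_pow_mod (n k : ℕ) :
    (root ((X : F[X]) ^ n - 1)) ^ k = (root ((X : F[X]) ^ n - 1)) ^ (k % n) := by
  conv_lhs => rw [← Nat.div_add_mod k n]
  rw [pow_add, pow_mul, root_pow_n, one_pow, one_mul]

def sig (n : ℕ) : AdjoinRoot ((X : F[X]) ^ n - 1) →ₐ[F] AdjoinRoot ((X : F[X]) ^ n - 1) :=
  AdjoinRoot.liftAlgHom _ (Algebra.ofId F _) (root _ ^ (n - 1)) (by
    show aeval (root ((X : F[X]) ^ n - 1) ^ (n - 1)) ((X : F[X]) ^ n - 1) = 0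
    rw [map_sub, map_one, map_pow, aeval_X, ← pow_mul, root_pow_mod, Nat.mul_mod_left]
    simp)

lemma sig_mk (n : ℕ) (P : F[X]) :
    sig n (mk ((X : F[X]) ^ n - 1) P) = aeval (root ((X : F[X]) ^ n - 1) ^ (n - 1)) P := by
  rw [sig]; exact AdjoinRoot.liftAlgHom_mk _ _ _ _ _

lemma sig_root (n : ℕ) :
    sig n (root ((X : F[X]) ^ n - 1)) = root ((X : F[X]) ^ n - 1) ^ (n - 1) := by
  conv_lhs => rw [← mk_X]
  rw [sig_mk, aeval_X]

lemma sig_root_pow (n k : ℕ) :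
    sig n (root ((X : F[X]) ^ n - 1) ^ k) = root ((X : F[X]) ^ n - 1) ^ ((n - 1) * k) := by
  rw [map_pow, sig_root, ← pow_mul]

lemma sig_sig (n : ℕ) (hn : 0 < n) (z : AdjoinRoot ((X : F[X]) ^ n - 1)) :
    sig n (sig n z) = z := by
  have key : ((n - 1) * (n - 1)) % n = 1 % n := by
    have h1 : (((n - 1) * (n - 1) : ℕ) : ZMod n) = ((1 : ℕ) : ZMod n) := by
      push_cast [Nat.cast_sub hn]
      have : ((n : ZMod n) - 1) * ((n : ZMod n) - 1) = 1 := by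
        rw [ZMod.natCast_self]; ring
      simpa using this
    exact (ZMod.natCast_eq_natCast_iff' _ _ _).mp h1
  have hcomp : (sig n (F := F)).comp (sig n) = AlgHom.id F _ := by
    apply AdjoinRoot.algHom_ext
    rw [AlgHom.comp_apply, sig_root, sig_root_pow, AlgHom.id_apply, root_pow_mod, key,
      ← root_pow_mod, pow_one]
  exact AlgHom.congr_fun hcomp z

def epsR (n : ℕ) (hn : 0 < n) : AdjoinRoot ((X : F[X]) ^ n - 1) →ₗ[F] F :=
  (Polynomial.lcoeff F 0).comp (AdjoinRoot.modByMonicHom (monic_m hn))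

lemma epsR_mk (n : ℕ) (hn : 0 < n) (P : F[X]) :
    epsR n hn (mk ((X : F[X]) ^ n - 1) P) = (P %ₘ ((X : F[X]) ^ n - 1)).coeff 0 := by
  simp [epsR, AdjoinRoot.modByMonicHom_mk]

lemma X_pow_mod (n : ℕ) (hn : 0 < n) (k : ℕ) :
    (X : F[X]) ^ k %ₘ ((X : F[X]) ^ n - 1) = X ^ (k % n) := by
  have hdvd : ((X : F[X]) ^ n - 1) ∣ X ^ k - X ^ (k % n) := by
    have h1 : (X : F[X]) ^ k = X ^ (k % n) * (X ^ n) ^ (k / n) := by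
      rw [← pow_mul, ← pow_add, Nat.mod_add_div]
    rw [h1, show (X : F[X]) ^ (k % n) * ((X : F[X]) ^ n) ^ (k / n) - X ^ (k % n)
      = X ^ (k % n) * (((X : F[X]) ^ n) ^ (k / n) - 1 ^ (k / n)) from by ring]
    exact Dvd.dvd.mul_left (sub_dvd_pow_sub_pow _ _ _) _
  have h1 : ((X : F[X]) ^ k - X ^ (k % n)) %ₘ ((X : F[X]) ^ n - 1) = 0 :=
    (Polynomial.modByMonic_eq_zero_iff_dvd (monic_m hn)).mpr hdvd
  rw [Polynomial.sub_modByMonic, sub_eq_zero] at h1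
  rw [h1, Polynomial.modByMonic_eq_self_iff (monic_m hn), degree_m hn]
  exact lt_of_le_of_lt (Polynomial.degree_X_pow_le _)
    (by exact_mod_cast Nat.mod_lt _ hn)

lemma epsR_root_pow (n : ℕ) (hn : 0 < n) (k : ℕ) :
    epsR n hn (root ((X : F[X]) ^ n - 1) ^ k) = if k % n = 0 then 1 else 0 := by
  rw [← mk_X, ← map_pow, epsR_mk, X_pow_mod n hn k, Polynomial.coeff_X_pow]
  simp [eq_comm]

lemma dvd_arith {d i j : ℕ} (hi : i ≤ d) (hj : j ≤ d) :
    (d + 1) ∣ (i + d * j) ↔ i = j := by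
  constructor
  · intro hdvd
    have h1 : ((d : ℤ) + 1) ∣ ((i : ℤ) + d * j) := by exact_mod_cast hdvd
    have h2 : ((d : ℤ) + 1) ∣ ((i : ℤ) - j) := by
      have h3 : ((i : ℤ) - j) = (i + d * j) - (d + 1) * j := by ring
      rw [h3]
      exact dvd_sub h1 (dvd_mul_right _ _)
    have h4 : (i : ℤ) - j = 0 := Int.eq_zero_of_abs_lt_dvd h2 (by
      rw [abs_lt]; constructor <;> [omega; omega])
    omega
  · rintro rfl
    exact ⟨i, by ring⟩

lemma eps_root_sig (n : ℕ) (hn : 0 < n) (i j : ℕ) (hi : i < n) (hj : j < n) :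
    epsR n hn (root ((X : F[X]) ^ n - 1) ^ i * sig n (root ((X : F[X]) ^ n - 1) ^ j))
      = if i = j then 1 else 0 := by
  obtain ⟨d, rfl⟩ : ∃ d, n = d + 1 := ⟨n - 1, by omega⟩
  rw [sig_root_pow, ← pow_add, epsR_root_pow]
  simp only [Nat.add_sub_cancel]
  congr 1
  rw [eq_iff_iff, ← Nat.dvd_iff_mod_eq_zero]
  exact dvd_arith (by omega) (by omega)

lemma mk_monomial (n : ℕ) (i : ℕ) (c : F) :
    mk ((X : F[X]) ^ n - 1) (monomial i c) = c • root ((X : F[X]) ^ n - 1) ^ i := by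
  rw [← Polynomial.C_mul_X_pow_eq_monomial, ← Polynomial.smul_eq_C_mul,
    ← mk_X (f := (X : F[X]) ^ n - 1), ← map_pow, AdjoinRoot.smul_mk]

lemma mk_eq_sum (n : ℕ) (u : F[X]) (hu : u.natDegree < n) :
    mk ((X : F[X]) ^ n - 1) u
      = ∑ i ∈ Finset.range n, u.coeff i • root ((X : F[X]) ^ n - 1) ^ i := by
  conv_lhs => rw [Polynomial.as_sum_range' u n hu]
  rw [map_sum]
  exact Finset.sum_congr rfl fun i _ => mk_monomial n i _

lemma pairing (n : ℕ) (hn : 0 < n) (P Q : F[X]) :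
    ∑ i : Fin n, (P %ₘ ((X : F[X]) ^ n - 1)).coeff i * (Q %ₘ ((X : F[X]) ^ n - 1)).coeff i
      = epsR n hn (mk ((X : F[X]) ^ n - 1) P * sig n (mk ((X : F[X]) ^ n - 1) Q)) := by
  have hP : mk ((X : F[X]) ^ n - 1) P = mk _ (P %ₘ ((X : F[X]) ^ n - 1)) :=
    mk_eq_mk.mpr (dvd_sub_mod hn P)
  have hQ : mk ((X : F[X]) ^ n - 1) Q = mk _ (Q %ₘ ((X : F[X]) ^ n - 1)) :=
    mk_eq_mk.mpr (dvd_sub_mod hn Q)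
  rw [hP, hQ, mk_eq_sum n _ (natDegree_mod_lt hn P), mk_eq_sum n _ (natDegree_mod_lt hn Q),
    map_sum, Finset.sum_mul_sum]
  simp only [map_smul, smul_mul_smul_comm, map_sum, smul_eq_mul]
  rw [Fin.sum_univ_eq_sum_range
    (fun i => (P %ₘ ((X : F[X]) ^ n - 1)).coeff i * (Q %ₘ ((X : F[X]) ^ n - 1)).coeff i)]
  symm
  trans (∑ i ∈ Finset.range n, ∑ j ∈ Finset.range n,
    (P %ₘ ((X : F[X]) ^ n - 1)).coeff i * (Q %ₘ ((X : F[X]) ^ n - 1)).coeff j *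
      (if i = j then (1 : F) else 0))
  · exact Finset.sum_congr rfl fun i hi => Finset.sum_congr rfl fun j hj => by
      rw [eps_root_sig n hn i j (Finset.mem_range.mp hi) (Finset.mem_range.mp hj)]
  · refine Finset.sum_congr rfl fun i hi => ?_
    simp only [mul_ite, mul_one, mul_zero]
    rw [Finset.sum_ite_eq (Finset.range n) i
      (fun j => (P %ₘ ((X : F[X]) ^ n - 1)).coeff i * (Q %ₘ ((X : F[X]) ^ n - 1)).coeff j)]
    simp [hi]


lemma natDegree_m {n : ℕ} (hn : 0 < n) : ((X : F[X]) ^ n - 1).natDegree = n :=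
  Polynomial.natDegree_eq_of_degree_eq_some (degree_m hn)

lemma divq_mul (n : ℕ) {g : F[X]} (hg : g.Monic) (hgdvd : g ∣ (X : F[X]) ^ n - 1) :
    g * (((X : F[X]) ^ n - 1) /ₘ g) = (X : F[X]) ^ n - 1 := by
  have hmd := Polynomial.modByMonic_add_div ((X : F[X]) ^ n - 1) g
  rwa [(Polynomial.modByMonic_eq_zero_iff_dvd hg).mpr hgdvd, zero_add] at hmd

lemma divq_natDegree_le (n : ℕ) (hn : 0 < n) {g : F[X]} (hg : g.Monic)
    (hgdvd : g ∣ (X : F[X]) ^ n - 1) : (((X : F[X]) ^ n - 1) /ₘ g).natDegree ≤ n := by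
  have hdvd : (((X : F[X]) ^ n - 1) /ₘ g) ∣ ((X : F[X]) ^ n - 1) :=
    ⟨g, by rw [mul_comm]; exact (divq_mul n hg hgdvd).symm⟩
  have h2 := Polynomial.natDegree_le_of_dvd hdvd (monic_m hn).ne_zero
  rwa [natDegree_m hn] at h2

lemma reflect_as_sum (N : ℕ) (p : F[X]) (hp : p.natDegree ≤ N) :
    reflect N p = ∑ i ∈ Finset.range (N + 1), C (p.coeff i) * X ^ (N - i) := by
  ext j
  rw [Polynomial.coeff_reflect, Polynomial.finset_sum_coeff]
  simp only [Polynomial.coeff_C_mul, Polynomial.coeff_X_pow, mul_ite, mul_one, mul_zero]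
  by_cases hj : j ≤ N
  · rw [Polynomial.revAt_le hj, Finset.sum_eq_single (N - j)]
    · simp [Nat.sub_sub_self hj]
    · intro i hi hne
      have hiN : i ≤ N := by
        have := Finset.mem_range.mp hi; omega
      rw [if_neg fun hc => hne (by omega)]
    · intro hmem
      exact absurd (Finset.mem_range.mpr (by omega)) hmem
  · rw [Polynomial.revAt_eq_self_of_lt (by omega)]
    rw [Polynomial.coeff_eq_zero_of_natDegree_lt (by omega)]
    symm
    apply Finset.sum_eq_zero
    intro i hi
    rw [if_neg (by have := Finset.mem_range.mp hi; omega)]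

lemma mk_reflect (n : ℕ) (hn : 0 < n) (N : ℕ) (p : F[X]) (hp : p.natDegree ≤ N) :
    mk ((X : F[X]) ^ n - 1) (reflect N p)
      = root ((X : F[X]) ^ n - 1) ^ N * sig n (mk ((X : F[X]) ^ n - 1) p) := by
  rw [reflect_as_sum N p hp]
  conv_rhs => rw [Polynomial.as_sum_range' p (N + 1) (Nat.lt_succ_of_le hp)]
  rw [map_sum, map_sum, map_sum, Finset.mul_sum]
  refine Finset.sum_congr rfl fun i hi => ?_
  have hiN : i ≤ N := by have := Finset.mem_range.mp hi; omega
  rw [Polynomial.C_mul_X_pow_eq_monomial, mk_monomial, mk_monomial, map_smul, sig_root_pow,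
    mul_smul_comm, ← pow_add]
  have harith : N + (n - 1) * i = (N - i) + n * i := by
    obtain ⟨d, rfl⟩ : ∃ d, n = d + 1 := ⟨n - 1, by omega⟩
    have h1 : (d + 1) * i = d * i + i := by ring
    simp only [Nat.add_sub_cancel]
    omega
  rw [harith, pow_add, pow_mul, root_pow_n, one_pow, mul_one]

lemma mk_reverse (n : ℕ) (hn : 0 < n) (p : F[X]) :
    mk ((X : F[X]) ^ n - 1) p.reverse
      = root ((X : F[X]) ^ n - 1) ^ p.natDegree * sig n (mk ((X : F[X]) ^ n - 1) p) := by
  rw [Polynomial.reverse]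
  exact mk_reflect n hn _ p le_rfl

lemma barPoly_eq_reflect (n : ℕ) (u : F[X]) (hu : u.natDegree ≤ n) :
    barPoly n u = reflect n u := by
  rw [barPoly, reflect_as_sum n u hu]
  exact Finset.sum_subset
    (fun i hi => Finset.mem_range.mpr
      (Nat.lt_succ_of_le (le_trans (Polynomial.le_natDegree_of_mem_supp i hi) hu)))
    (fun i _ hni => by rw [Polynomial.notMem_support_iff.mp hni, map_zero, zero_mul])

lemma mk_barPoly (n : ℕ) (hn : 0 < n) (u : F[X]) (hu : u.natDegree ≤ n) :
    mk ((X : F[X]) ^ n - 1) (barPoly n u) = sig n (mk ((X : F[X]) ^ n - 1) u) := by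
  rw [barPoly_eq_reflect n u hu, mk_reflect n hn n u hu, root_pow_n, one_mul]

lemma eps_nondeg (n : ℕ) (hn : 0 < n) (z : AdjoinRoot ((X : F[X]) ^ n - 1))
    (hz : ∀ e, epsR n hn (z * e) = 0) : z = 0 := by
  obtain ⟨u, rfl⟩ := mk_surjective z
  have hcoeff : ∀ k, k < n → (u %ₘ ((X : F[X]) ^ n - 1)).coeff k = 0 := by
    intro k hk
    have h1 := hz (sig n (mk ((X : F[X]) ^ n - 1) (X ^ k)))
    rw [← pairing n hn u (X ^ k)] at h1
    have hXk : (X : F[X]) ^ k %ₘ ((X : F[X]) ^ n - 1) = X ^ k := by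
      rw [Polynomial.modByMonic_eq_self_iff (monic_m hn), degree_m hn]
      exact lt_of_le_of_lt (Polynomial.degree_X_pow_le _) (by exact_mod_cast hk)
    rw [hXk] at h1
    have hsum : ∑ i : Fin n, (u %ₘ ((X : F[X]) ^ n - 1)).coeff i * ((X : F[X]) ^ k).coeff i
        = (u %ₘ ((X : F[X]) ^ n - 1)).coeff k := by
      rw [Finset.sum_eq_single (⟨k, hk⟩ : Fin n)]
      · simp [Polynomial.coeff_X_pow]
      · intro j _ hne
        rw [Polynomial.coeff_X_pow, if_neg fun hc => hne (Fin.ext hc), mul_zero]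
      · intro hmem
        exact absurd (Finset.mem_univ _) hmem
    rw [hsum] at h1
    exact h1
  have hu0 : u %ₘ ((X : F[X]) ^ n - 1) = 0 := by
    ext k
    rw [Polynomial.coeff_zero]
    by_cases hk : k < n
    · exact hcoeff k hk
    · exact Polynomial.coeff_eq_zero_of_natDegree_lt
        (lt_of_lt_of_le (natDegree_mod_lt hn u) (by omega))
  exact AdjoinRoot.mk_eq_zero.mpr ((Polynomial.modByMonic_eq_zero_iff_dvd (monic_m hn)).mp hu0)

lemma ann (n : ℕ) (hn : 0 < n) {g : F[X]} (hg : g.Monic) (hgdvd : g ∣ (X : F[X]) ^ n - 1)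
    (z : AdjoinRoot ((X : F[X]) ^ n - 1)) (hz : z * mk ((X : F[X]) ^ n - 1) g = 0) :
    ∃ w, z = w * mk ((X : F[X]) ^ n - 1) (((X : F[X]) ^ n - 1) /ₘ g) := by
  obtain ⟨u, rfl⟩ := mk_surjective z
  rw [← map_mul, AdjoinRoot.mk_eq_zero, ← divq_mul n hg hgdvd] at hz
  have hdvd : (((X : F[X]) ^ n - 1) /ₘ g) ∣ u := by
    have h2 : (((X : F[X]) ^ n - 1) /ₘ g) * g ∣ u * g := by rwa [mul_comm] at hz
    exact (mul_dvd_mul_iff_right hg.ne_zero).mp h2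
  obtain ⟨t, rfl⟩ := hdvd
  exact ⟨mk _ t, by rw [← map_mul, mul_comm]⟩

lemma factor_perp (n : ℕ) (hn : 0 < n) {g : F[X]} (hg : g.Monic)
    (hgdvd : g ∣ (X : F[X]) ^ n - 1) (z : AdjoinRoot ((X : F[X]) ^ n - 1))
    (hz : z * sig n (mk ((X : F[X]) ^ n - 1) g) = 0) :
    ∃ a : F[X], z = mk ((X : F[X]) ^ n - 1) a * mk ((X : F[X]) ^ n - 1) (perpPoly n g) := by
  obtain ⟨w, hw⟩ := ann n hn hg hgdvd (sig n z) (by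
    have h3 := congrArg (sig n) hz
    rw [map_mul, map_zero, sig_sig n hn] at h3
    exact h3)
  have h5 := congrArg (sig n) hw
  rw [map_mul, sig_sig n hn] at h5
  have h6 : mk ((X : F[X]) ^ n - 1) (perpPoly n g)
      = root ((X : F[X]) ^ n - 1) ^ (((X : F[X]) ^ n - 1) /ₘ g).natDegree
        * sig n (mk ((X : F[X]) ^ n - 1) (((X : F[X]) ^ n - 1) /ₘ g)) := by
    rw [perpPoly]
    exact mk_reverse n hn _
  have hN : (((X : F[X]) ^ n - 1) /ₘ g).natDegree ≤ n := divq_natDegree_le n hn hg hgdvd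
  have h7 : root ((X : F[X]) ^ n - 1) ^ (n - (((X : F[X]) ^ n - 1) /ₘ g).natDegree)
        * mk ((X : F[X]) ^ n - 1) (perpPoly n g)
      = sig n (mk ((X : F[X]) ^ n - 1) (((X : F[X]) ^ n - 1) /ₘ g)) := by
    rw [h6, ← mul_assoc, ← pow_add, show n - (((X : F[X]) ^ n - 1) /ₘ g).natDegree
      + (((X : F[X]) ^ n - 1) /ₘ g).natDegree = n from by omega, root_pow_n, one_mul]
  obtain ⟨t, ht⟩ := AdjoinRoot.mk_surjective
    (sig n w * root ((X : F[X]) ^ n - 1) ^ (n - (((X : F[X]) ^ n - 1) /ₘ g).natDegree))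
  exact ⟨t, by rw [h5, ← h7, ← mul_assoc, ht]⟩

lemma perp_sig_zero (n : ℕ) (hn : 0 < n) {g : F[X]} (hg : g.Monic)
    (hgdvd : g ∣ (X : F[X]) ^ n - 1) :
    mk ((X : F[X]) ^ n - 1) (perpPoly n g) * sig n (mk ((X : F[X]) ^ n - 1) g) = 0 := by
  rw [perpPoly, mk_reverse n hn, mul_assoc, ← map_mul, ← map_mul,
    show ((X : F[X]) ^ n - 1) /ₘ g * g = g * (((X : F[X]) ^ n - 1) /ₘ g) from mul_comm _ _,
    divq_mul n hg hgdvd, AdjoinRoot.mk_self, map_zero, mul_zero]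

lemma sInn_eq (n : ℕ) (hn : 0 < n) (P S U V : F[X]) :
    sInn (vecOf n P, vecOf n S) (vecOf n U, vecOf n V)
      = epsR n hn (mk ((X : F[X]) ^ n - 1) P * sig n (mk ((X : F[X]) ^ n - 1) V)
          - mk ((X : F[X]) ^ n - 1) S * sig n (mk ((X : F[X]) ^ n - 1) U)) := by
  have hs : sInn (vecOf n P, vecOf n S) (vecOf n U, vecOf n V)
      = (∑ i : Fin n, (P %ₘ ((X : F[X]) ^ n - 1)).coeff i * (V %ₘ ((X : F[X]) ^ n - 1)).coeff i)
        - ∑ i : Fin n, (S %ₘ ((X : F[X]) ^ n - 1)).coeff i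
            * (U %ₘ ((X : F[X]) ^ n - 1)).coeff i := by
    rw [sInn, ← Finset.sum_sub_distrib]
    exact Finset.sum_congr rfl fun i _ => rfl
  rw [hs, pairing n hn P V, pairing n hn S U, ← map_sub]

lemma mem_QCcode {n : ℕ} {f g h : F[X]} {v : (Fin n → F) × (Fin n → F)} :
    v ∈ (QCcode n f g h : Set ((Fin n → F) × (Fin n → F)))
      ↔ ∃ a b : F[X], v = (vecOf n (a * f), vecOf n (a * h * f + b * g)) := Iff.rfl

end Stmt3Aux

/-- the symplectic dual of `Q_q(f,g,h)` is the QC code generated by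
`([g^⊥], [hbar g^⊥])` and `(0, [f^⊥])`. -/
theorem stmt3 [Fintype F] (n : ℕ) (hn : 0 < n) (f g h : F[X])
    (hf : f.Monic) (hg : g.Monic) (hh : h.Monic)
    (hfd : f.degree < n) (hgd : g.degree < n) (hhd : h.degree < n)
    (hfdvd : f ∣ X ^ n - 1) (hgdvd : g ∣ X ^ n - 1) :
    sDualSet (QCcode n f g h : Set ((Fin n → F) × (Fin n → F))) =
      (QCcode n (perpPoly n g) (perpPoly n f) (barPoly n h) :
        Set ((Fin n → F) × (Fin n → F))) := by
  classical
  have hhn : h.natDegree ≤ n := Polynomial.natDegree_le_iff_degree_le.mpr hhd.le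
  ext x
  simp only [Stmt3Aux.mem_QCcode, sDualSet, Set.mem_setOf_eq]
  constructor
  · intro hx
    set P : F[X] := ∑ i : Fin n, C (x.1 i) * X ^ (i : ℕ) with hPdef
    set S : F[X] := ∑ i : Fin n, C (x.2 i) * X ^ (i : ℕ) with hSdef
    have hvP : vecOf n P = x.1 := Stmt3Aux.vecOf_poly hn x.1
    have hvS : vecOf n S = x.2 := Stmt3Aux.vecOf_poly hn x.2
    have hxsplit : x = (vecOf n P, vecOf n S) := by
      rw [hvP, hvS]
    have key : ∀ c d : F[X],
        Stmt3Aux.epsR n hn (AdjoinRoot.mk (X ^ n - 1) P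
            * Stmt3Aux.sig n (AdjoinRoot.mk (X ^ n - 1) (c * h * f + d * g))
          - AdjoinRoot.mk (X ^ n - 1) S
            * Stmt3Aux.sig n (AdjoinRoot.mk (X ^ n - 1) (c * f))) = 0 := by
      intro c d
      have h1 := hx (vecOf n (c * f), vecOf n (c * h * f + d * g))
        (Stmt3Aux.mem_QCcode.mpr ⟨c, d, rfl⟩)
      rwa [hxsplit, Stmt3Aux.sInn_eq n hn] at h1
    have hzd : AdjoinRoot.mk (X ^ n - 1) P * Stmt3Aux.sig n (AdjoinRoot.mk (X ^ n - 1) g)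
        = 0 := by
      apply Stmt3Aux.eps_nondeg n hn
      intro e
      obtain ⟨d, hd⟩ := AdjoinRoot.mk_surjective (Stmt3Aux.sig n e)
      have h2 := key 0 d
      simp only [zero_mul, zero_add, map_zero, mul_zero, sub_zero, map_mul] at h2
      rw [hd, Stmt3Aux.sig_sig n hn] at h2
      rw [show AdjoinRoot.mk (X ^ n - 1) P * Stmt3Aux.sig n (AdjoinRoot.mk (X ^ n - 1) g) * e
        = AdjoinRoot.mk (X ^ n - 1) P * (e * Stmt3Aux.sig n (AdjoinRoot.mk (X ^ n - 1) g))
        from by ring]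
      exact h2
    have hzc : (AdjoinRoot.mk (X ^ n - 1) P * Stmt3Aux.sig n (AdjoinRoot.mk (X ^ n - 1) h)
          - AdjoinRoot.mk (X ^ n - 1) S) * Stmt3Aux.sig n (AdjoinRoot.mk (X ^ n - 1) f)
        = 0 := by
      apply Stmt3Aux.eps_nondeg n hn
      intro e
      obtain ⟨c, hc⟩ := AdjoinRoot.mk_surjective (Stmt3Aux.sig n e)
      have h2 := key c 0
      simp only [zero_mul, add_zero, map_mul] at h2
      rw [hc, Stmt3Aux.sig_sig n hn] at h2
      rw [show (AdjoinRoot.mk (X ^ n - 1) P * Stmt3Aux.sig n (AdjoinRoot.mk (X ^ n - 1) h)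
          - AdjoinRoot.mk (X ^ n - 1) S) * Stmt3Aux.sig n (AdjoinRoot.mk (X ^ n - 1) f) * e
        = AdjoinRoot.mk (X ^ n - 1) P
            * (e * Stmt3Aux.sig n (AdjoinRoot.mk (X ^ n - 1) h)
              * Stmt3Aux.sig n (AdjoinRoot.mk (X ^ n - 1) f))
          - AdjoinRoot.mk (X ^ n - 1) S
            * (e * Stmt3Aux.sig n (AdjoinRoot.mk (X ^ n - 1) f)) from by ring]
      exact h2
    obtain ⟨a, ha⟩ := Stmt3Aux.factor_perp n hn hg hgdvd (AdjoinRoot.mk (X ^ n - 1) P) hzd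
    have hzc2 : (AdjoinRoot.mk (X ^ n - 1) a * AdjoinRoot.mk (X ^ n - 1) (perpPoly n g)
          * Stmt3Aux.sig n (AdjoinRoot.mk (X ^ n - 1) h) - AdjoinRoot.mk (X ^ n - 1) S)
        * Stmt3Aux.sig n (AdjoinRoot.mk (X ^ n - 1) f) = 0 := by
      rw [← ha]; exact hzc
    obtain ⟨b, hb⟩ := Stmt3Aux.factor_perp n hn hf hfdvd _ hzc2
    refine ⟨a, -b, ?_⟩
    have e1 : x.1 = vecOf n (a * perpPoly n g) := by
      rw [← hvP]
      refine Stmt3Aux.vecOf_eq_of_dvd hn (AdjoinRoot.mk_eq_mk.mp ?_)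
      rw [map_mul]; exact ha
    have e2 : x.2 = vecOf n (a * barPoly n h * perpPoly n g + (-b) * perpPoly n f) := by
      rw [← hvS]
      refine Stmt3Aux.vecOf_eq_of_dvd hn (AdjoinRoot.mk_eq_mk.mp ?_)
      have hbar := Stmt3Aux.mk_barPoly n hn h hhn
      rw [map_add, map_mul, map_mul, map_mul, map_neg, hbar]
      linear_combination -hb
    exact Prod.ext e1 e2
  · rintro ⟨a, b, rfl⟩ y hy
    obtain ⟨c, d, rfl⟩ := Stmt3Aux.mem_QCcode.mp hy
    rw [Stmt3Aux.sInn_eq n hn]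
    have hzg := Stmt3Aux.perp_sig_zero n hn hg hgdvd
    have hzf := Stmt3Aux.perp_sig_zero n hn hf hfdvd
    have hbar := Stmt3Aux.mk_barPoly n hn h hhn
    have harg : AdjoinRoot.mk (X ^ n - 1) (a * perpPoly n g)
          * Stmt3Aux.sig n (AdjoinRoot.mk (X ^ n - 1) (c * h * f + d * g))
        - AdjoinRoot.mk (X ^ n - 1) (a * barPoly n h * perpPoly n g + b * perpPoly n f)
          * Stmt3Aux.sig n (AdjoinRoot.mk (X ^ n - 1) (c * f)) = 0 := by
      simp only [map_add, map_mul, hbar]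
      linear_combination (AdjoinRoot.mk (X ^ n - 1) a
          * Stmt3Aux.sig n (AdjoinRoot.mk (X ^ n - 1) d)) * hzg
        - (AdjoinRoot.mk (X ^ n - 1) b
          * Stmt3Aux.sig n (AdjoinRoot.mk (X ^ n - 1) c)) * hzf
    rw [harg, map_zero]


end
end

section
/- Every element of the R-submodule of R^2 generated by ([g^perp(x)], [hbar(x) g^perp(x)]) and (0, [f^perp(x)]) has symplectic inner product zero with every element of the quasi-cyclic code Q_q(f,g,h); equivalently, the quasi-cyclic code generated by ([g^perp(x)], [hbar(x) g^perp(x)]) and (0, [f^perp(x)]) is contained in Q_q(f,g,h)^{perp_s}. -/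
open Polynomial Finset
set_option linter.unusedSectionVars false

noncomputable section

variable {F : Type*} [Field F] [DecidableEq F]

/-! ### Auxiliary machinery for `stmt4` -/

/-- The "reversal at level `n-1`" of (the low-degree part of) a polynomial. -/
def revn (n : ℕ) (w : F[X]) : F[X] :=
  ∑ i ∈ Finset.range n, C (w.coeff i) * X ^ (n - 1 - i)

lemma aux_monic_M {n : ℕ} (hn : 0 < n) : (X ^ n - 1 : F[X]).Monic := by
  simpa using monic_X_pow_sub_C (1 : F) hn.ne'

lemma aux_natDegree_mod {n : ℕ} (hn : 0 < n) (w : F[X]) :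
    (w %ₘ (X ^ n - 1 : F[X])).natDegree < n := by
  by_cases h0 : w %ₘ (X ^ n - 1 : F[X]) = 0
  · simpa [h0] using hn
  · rw [natDegree_lt_iff_degree_lt h0]
    have := degree_modByMonic_lt w (aux_monic_M (F := F) hn)
    have hdeg : (X ^ n - 1 : F[X]).degree = (n : WithBot ℕ) := by
      simpa using degree_X_pow_sub_C hn (1 : F)
    rwa [hdeg] at this

/-- Step 1: the Euclidean inner product as a coefficient of a product. -/
lemma aux_eInn_coeff {n : ℕ} (hn : 0 < n) (u v : F[X]) :
    eInn (vecOf n u) (vecOf n v) =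
      ((u %ₘ (X ^ n - 1 : F[X])) * revn n (v %ₘ (X ^ n - 1 : F[X]))).coeff (n - 1) := by
  set u' := u %ₘ (X ^ n - 1 : F[X])
  set v' := v %ₘ (X ^ n - 1 : F[X])
  rw [revn, Finset.mul_sum, finset_sum_coeff]
  have hterm : ∀ i ∈ Finset.range n,
      (u' * (C (v'.coeff i) * X ^ (n - 1 - i))).coeff (n - 1) = u'.coeff i * v'.coeff i := by
    intro i hi
    have hi' : i < n := Finset.mem_range.mp hi
    rw [show u' * (C (v'.coeff i) * X ^ (n - 1 - i)) = (u' * C (v'.coeff i)) * X ^ (n - 1 - i)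
        from (mul_assoc _ _ _).symm, coeff_mul_X_pow', if_pos (by omega),
      show n - 1 - (n - 1 - i) = i from by omega, coeff_mul_C]
  rw [Finset.sum_congr rfl hterm, eInn]
  simp only [vecOf, LinearMap.coe_mk, AddHom.coe_mk]
  exact Fin.sum_univ_eq_sum_range (fun i => u'.coeff i * v'.coeff i) n

/-- Step 2: a multiple of `X^n - 1` of degree at most `2n-2` has zero `(n-1)`-st coefficient. -/
lemma aux_coeff_of_dvd {n : ℕ} (hn : 0 < n) {P : F[X]}
    (hdvd : (X ^ n - 1 : F[X]) ∣ P) (hdeg : P.natDegree ≤ 2 * n - 2) :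
    P.coeff (n - 1) = 0 := by
  obtain ⟨Q, hQ⟩ := hdvd
  by_cases hQ0 : Q = 0
  · simp [hQ, hQ0]
  have hndM : (X ^ n - 1 : F[X]).natDegree = n := by
    simpa using natDegree_X_pow_sub_C (n := n) (r := (1 : F))
  have hnd : P.natDegree = n + Q.natDegree := by
    rw [hQ, natDegree_mul (aux_monic_M (F := F) hn).ne_zero hQ0, hndM]
  have hQd : Q.natDegree < n - 1 := by omega
  have h1 : ((X ^ n : F[X]) * Q).coeff (n - 1) = 0 := by
    rw [mul_comm, coeff_mul_X_pow', if_neg (by omega)]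
  have h2 : Q.coeff (n - 1) = 0 := coeff_eq_zero_of_natDegree_lt (by omega)
  rw [hQ, sub_mul, one_mul, coeff_sub, h1, h2, sub_zero]

lemma aux_reflect_sum {N : ℕ} {α : Type*} (s : Finset α) (f : α → F[X]) :
    reflect N (∑ i ∈ s, f i) = ∑ i ∈ s, reflect N (f i) := by
  classical
  induction s using Finset.induction_on with
  | empty => simp
  | insert _ _ h ih => rw [Finset.sum_insert h, Finset.sum_insert h, reflect_add, ih]

lemma aux_barPoly_eq_reflect {n : ℕ} {p : F[X]} (hp : p.natDegree < n) :
    barPoly n p = reflect n p := by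
  conv_rhs => rw [p.as_sum_support_C_mul_X_pow, aux_reflect_sum]
  rw [barPoly]
  refine Finset.sum_congr rfl fun i hi => ?_
  have hin : i ≤ n := le_trans (le_natDegree_of_mem_supp i hi) hp.le
  rw [reflect_C_mul_X_pow, revAt_le hin]

lemma aux_reflect_eq {N : ℕ} {p : F[X]} (hp : p.natDegree ≤ N) :
    reflect N p = X ^ (N - p.natDegree) * p.reverse := by
  set d := p.natDegree with hd
  ext k
  rw [coeff_reflect, mul_comm, coeff_mul_X_pow']
  rcases le_or_gt k N with hk | hk
  · rw [revAt_le hk]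
    by_cases hm : N - d ≤ k
    · rw [if_pos hm, coeff_reverse, revAt_le (by omega : k - (N - d) ≤ d),
        show d - (k - (N - d)) = N - k from by omega]
    · rw [if_neg hm]
      exact coeff_eq_zero_of_natDegree_lt (by omega)
  · have h1 : (revAt N) k = k := by
      exact if_neg (by omega)
    have h2 : (revAt p.natDegree) (k - (N - d)) = k - (N - d) := by
      exact if_neg (by omega)
    rw [h1, if_pos (by omega), coeff_reverse, h2,
      coeff_eq_zero_of_natDegree_lt (by omega), coeff_eq_zero_of_natDegree_lt (by omega)]

lemma aux_reverse_M {n : ℕ} (hn : 0 < n) : (X ^ n - 1 : F[X]).reverse = 1 - X ^ n := by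
  have hnd : (X ^ n - 1 : F[X]).natDegree = n := by
    simpa using (natDegree_X_pow_sub_C (n := n) (r := (1 : F)))
  rw [reverse, hnd, reflect_sub, reflect_monomial, revAt_le le_rfl, Nat.sub_self, pow_zero,
    reflect_one]

section Quot

variable {n : ℕ}

/-- The quotient map `F[X] → F[X]/(X^n-1)`. -/
abbrev piq (n : ℕ) : F[X] →+* F[X] ⧸ Ideal.span {(X : F[X]) ^ n - 1} :=
  Ideal.Quotient.mk _

lemma aux_piq_M : piq n ((X : F[X]) ^ n - 1) = 0 :=
  Ideal.Quotient.eq_zero_iff_mem.2 (Ideal.subset_span rfl)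

lemma aux_t_pow : (piq n (X : F[X])) ^ n = 1 := by
  have : piq n ((X : F[X]) ^ n - 1) = 0 := aux_piq_M
  rw [map_sub, map_pow, map_one, sub_eq_zero] at this
  exact this

lemma aux_dvd_iff {P : F[X]} : ((X : F[X]) ^ n - 1) ∣ P ↔ piq n P = 0 := by
  rw [Ideal.Quotient.eq_zero_iff_mem, Ideal.mem_span_singleton]

lemma aux_pow_cancel (hn : 0 < n) {a b : F[X] ⧸ Ideal.span {(X : F[X]) ^ n - 1}} {i : ℕ}
    (h : a * (piq n X) ^ i = b * (piq n X) ^ i) : a = b := by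
  have hu : IsUnit ((piq n (X : F[X])) ^ i) := by
    refine (IsUnit.of_mul_eq_one (a := piq n (X : F[X])) ((piq n X) ^ (n - 1)) ?_).pow i
    rw [← pow_succ']
    rw [show n - 1 + 1 = n from by omega]
    exact aux_t_pow
  exact hu.mul_right_cancel h

lemma aux_nat_mul {n : ℕ} (hn : 0 < n) (i : ℕ) : (n - 1) * i + i = n * i := by
  cases n with
  | zero => omega
  | succ m => rw [Nat.succ_sub_one, Nat.succ_mul]

lemma aux_pow_eq (hn : 0 < n) {i : ℕ} (hi : i ≤ n) :
    (piq n (X : F[X])) ^ ((n - 1) * i) = (piq n (X : F[X])) ^ (n - i) := by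
  apply aux_pow_cancel hn (i := i)
  rw [← pow_add, ← pow_add, aux_nat_mul hn i, show n - i + i = n from by omega, pow_mul,
    aux_t_pow, one_pow]

lemma aux_pow_eq' (hn : 0 < n) {i : ℕ} (hi : i < n) :
    (piq n (X : F[X])) ^ (n - 1 - i) =
      (piq n (X : F[X])) ^ (n - 1) * (piq n (X : F[X])) ^ ((n - 1) * i) := by
  apply aux_pow_cancel hn (i := i)
  rw [← pow_add, mul_assoc, ← pow_add, show n - 1 - i + i = n - 1 from by omega,
    aux_nat_mul hn i, pow_mul, aux_t_pow, one_pow, mul_one]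

lemma aux_algebraMap_eq (c : F) :
    algebraMap F (F[X] ⧸ Ideal.span {(X : F[X]) ^ n - 1}) c = piq n (C c) := rfl

/-- `σ(p) = π(barPoly n p)` for `p` of degree `< n`. -/
lemma aux_sigma_eq_bar (hn : 0 < n) {p : F[X]} (hp : p.natDegree < n) :
    aeval ((piq n (X : F[X])) ^ (n - 1)) p = piq n (barPoly n p) := by
  rw [aeval_def, eval₂_eq_sum, Polynomial.sum_def, barPoly, map_sum]
  refine Finset.sum_congr rfl fun i hi => ?_
  have hin : i ≤ n := le_trans (le_natDegree_of_mem_supp i hi) hp.le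
  rw [map_mul, map_pow, ← pow_mul, aux_pow_eq hn hin, aux_algebraMap_eq]

lemma aux_sigma_M (hn : 0 < n) :
    aeval ((piq n (X : F[X])) ^ (n - 1)) ((X : F[X]) ^ n - 1) = 0 := by
  rw [map_sub, map_one, map_pow, aeval_X, ← pow_mul, mul_comm, pow_mul, aux_t_pow, one_pow,
    sub_self]

lemma aux_sigma_mod (hn : 0 < n) (p : F[X]) :
    aeval ((piq n (X : F[X])) ^ (n - 1)) (p %ₘ ((X : F[X]) ^ n - 1)) =
      aeval ((piq n (X : F[X])) ^ (n - 1)) p := by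
  rw [modByMonic_eq_sub_mul_div p ((X : F[X]) ^ n - 1), map_sub, map_mul, aux_sigma_M hn, zero_mul,
    sub_zero]

lemma aux_piq_mod (p : F[X]) : piq n (p %ₘ ((X : F[X]) ^ n - 1)) = piq n p := by
  rcases Nat.eq_zero_or_pos n with h0 | h0
  · subst h0
    simp [modByMonic]
  rw [modByMonic_eq_sub_mul_div p ((X : F[X]) ^ n - 1), map_sub, map_mul, aux_piq_M, zero_mul,
    sub_zero]

/-- `π(revn n w) = t^{n-1} σ(w)` for `w` of degree `< n`. -/
lemma aux_piq_revn (hn : 0 < n) {w : F[X]} (hw : w.natDegree < n) :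
    piq n (revn n w) =
      (piq n (X : F[X])) ^ (n - 1) * aeval ((piq n (X : F[X])) ^ (n - 1)) w := by
  rw [aeval_def, eval₂_eq_sum_range' (algebraMap F _) hw, revn, map_sum, Finset.mul_sum]
  refine Finset.sum_congr rfl fun i hi => ?_
  have hi' : i < n := Finset.mem_range.mp hi
  rw [map_mul, map_pow, aux_pow_eq' hn hi', aux_algebraMap_eq, ← pow_mul]
  ring

/-- The key orthogonality relation: `π(g^⊥) σ(g) = 0`. -/
lemma aux_rel (hn : 0 < n) {g : F[X]} (hg : g.Monic) (hgd : g.natDegree < n)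
    (hdvd : g ∣ (X : F[X]) ^ n - 1) :
    piq n (perpPoly n g) * aeval ((piq n (X : F[X])) ^ (n - 1)) g = 0 := by
  have hM : ((X : F[X]) ^ n - 1) = g * (((X : F[X]) ^ n - 1) /ₘ g) := by
    conv_lhs => rw [← modByMonic_add_div ((X : F[X]) ^ n - 1) g]
    rw [(modByMonic_eq_zero_iff_dvd hg).mpr hdvd, zero_add]
  rw [aux_sigma_eq_bar hn hgd, aux_barPoly_eq_reflect hgd, aux_reflect_eq hgd.le, perpPoly,
    ← map_mul]
  have hprod : ((((X : F[X]) ^ n - 1) /ₘ g).reverse) * (X ^ (n - g.natDegree) * g.reverse)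
      = X ^ (n - g.natDegree) * (1 - X ^ n) := by
    rw [show ((((X : F[X]) ^ n - 1) /ₘ g).reverse) * (X ^ (n - g.natDegree) * g.reverse)
        = X ^ (n - g.natDegree) * ((((X : F[X]) ^ n - 1) /ₘ g).reverse * g.reverse) from by ring,
      ← reverse_mul_of_domain, mul_comm (((X : F[X]) ^ n - 1) /ₘ g) g, ← hM, aux_reverse_M hn]
  rw [hprod]
  simp [map_pow, aux_t_pow]

end Quot

lemma aux_natDegree_revn {n : ℕ} (w : F[X]) : (revn n w).natDegree ≤ n - 1 := by
  refine natDegree_sum_le_of_forall_le _ _ fun i hi => ?_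
  exact le_trans (natDegree_C_mul_X_pow_le _ _) (by omega)


/-- the QC code generated by `([g^⊥], [hbar g^⊥])` and `(0, [f^⊥])` is
contained in the symplectic dual of `Q_q(f,g,h)`. -/
theorem stmt4 [Fintype F] (n : ℕ) (hn : 0 < n) (f g h : F[X])
    (hf : f.Monic) (hg : g.Monic) (hh : h.Monic)
    (hfd : f.degree < n) (hgd : g.degree < n) (hhd : h.degree < n)
    (hfdvd : f ∣ X ^ n - 1) (hgdvd : g ∣ X ^ n - 1) :
    (QCcode n (perpPoly n g) (perpPoly n f) (barPoly n h) :
        Set ((Fin n → F) × (Fin n → F))) ⊆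
      sDualSet (QCcode n f g h : Set ((Fin n → F) × (Fin n → F))) := by
  have hfnd : f.natDegree < n := (natDegree_lt_iff_degree_lt hf.ne_zero).mpr hfd
  have hgnd : g.natDegree < n := (natDegree_lt_iff_degree_lt hg.ne_zero).mpr hgd
  have hhnd : h.natDegree < n := (natDegree_lt_iff_degree_lt hh.ne_zero).mpr hhd
  rintro x ⟨c, d, rfl⟩ y ⟨a, b, rfl⟩
  have hsplit : ∀ X Y : (Fin n → F) × (Fin n → F),
      sInn X Y = eInn X.1 Y.2 - eInn X.2 Y.1 := by
    intro X Y
    rw [sInn, eInn, eInn, Finset.sum_sub_distrib]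
  rw [hsplit]
  dsimp only
  rw [aux_eInn_coeff hn, aux_eInn_coeff hn, ← coeff_sub]
  apply aux_coeff_of_dvd hn
  · -- divisibility
    rw [aux_dvd_iff, map_sub, map_mul, map_mul, aux_piq_mod, aux_piq_mod,
      aux_piq_revn hn (aux_natDegree_mod hn _), aux_piq_revn hn (aux_natDegree_mod hn _),
      aux_sigma_mod hn, aux_sigma_mod hn]
    have rel_g := aux_rel hn hg hgnd hgdvd
    have rel_f := aux_rel hn hf hfnd hfdvd
    have rel_h := aux_sigma_eq_bar hn hhnd
    simp only [map_add, map_mul]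
    set t := piq n (X : F[X]) with ht
    set Sa := aeval (t ^ (n - 1)) a
    set Sb := aeval (t ^ (n - 1)) b
    set Sf := aeval (t ^ (n - 1)) f
    set Sg := aeval (t ^ (n - 1)) g
    set Sh := aeval (t ^ (n - 1)) h
    linear_combination (piq n c * piq n (perpPoly n g) * t ^ (n - 1) * Sa * Sf) * rel_h +
      (piq n c * t ^ (n - 1) * Sb) * rel_g - (piq n d * t ^ (n - 1) * Sa) * rel_f
  · -- degree bound
    refine le_trans (natDegree_sub_le _ _) (max_le ?_ ?_) <;>
    · refine le_trans natDegree_mul_le ?_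
      have h1 := aux_natDegree_mod (F := F) hn
      have h2 := aux_natDegree_revn (F := F) (n := n)
      have := h1 (c * perpPoly n g); have := h1 (a * h * f + b * g)
      have := h1 (c * barPoly n h * perpPoly n g + d * perpPoly n f); have := h1 (a * f)
      have := h2 ((a * h * f + b * g) %ₘ (X ^ n - 1)); have := h2 ((a * f) %ₘ (X ^ n - 1))
      omega

end
end

section
/- Assume that gcd(h(x) - beta, x^n - 1) = 1 in F_q[x] for every nonzero beta in F_q, and that f(x) divides g(x), g(x) divides g^perp(x), and g^perp(x) divides f^perp(x). Then the quasi-cyclic code Q := Q_q(f,g,h) satisfies Q^{perp_s} is contained in Q, the dimension of Q is 2n - deg(f(x)) - deg(g(x)), and every element of Q not lying in Q^{perp_s} has symplectic weight at least d_q(f,g,h) (the minimum, in the rational numbers, of d([g(x)]); d([(x^n-1)/gcd(x^n-1, h(x))]); d([lcm(f(x), g(x)/gcd(g(x), h(x)))]); and (d([f(x)]) + d([gcd(h(x)f(x), g(x))]) + (q-1) d([gcd(f(x), g(x))])) / q). -/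
open Polynomial Finset

noncomputable section

variable {F : Type*} [Field F] [DecidableEq F]

section Aux
set_option linter.unusedSectionVars false
variable {n : ℕ}

lemma M_monic (hn : 0 < n) : (X ^ n - 1 : F[X]).Monic := by
  simpa using monic_X_pow_sub_C (1 : F) hn.ne'

lemma M_degree (hn : 0 < n) : (X ^ n - 1 : F[X]).degree = n := by
  simpa using degree_X_pow_sub_C hn (1 : F)

lemma M_natDegree (hn : 0 < n) : (X ^ n - 1 : F[X]).natDegree = n :=
  natDegree_eq_of_degree_eq_some (M_degree hn)

lemma vecOf_eq_zero (hn : 0 < n) {a : F[X]} :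
    vecOf n a = (0 : Fin n → F) ↔ (X ^ n - 1 : F[X]) ∣ a := by
  rw [← modByMonic_eq_zero_iff_dvd (M_monic hn)]
  constructor
  · intro h
    ext i
    by_cases hi : i < n
    · exact congrFun h ⟨i, hi⟩
    · exact coeff_eq_zero_of_degree_lt
        (lt_of_lt_of_le (degree_modByMonic_lt a (M_monic hn))
          (by rw [M_degree hn]; exact_mod_cast Nat.le_of_not_lt hi))
  · intro h
    funext i
    show (a %ₘ (X ^ n - 1)).coeff i = 0
    rw [h, coeff_zero]

lemma vecOf_congr (hn : 0 < n) {a b : F[X]} (h : (X ^ n - 1 : F[X]) ∣ a - b) :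
    vecOf n a = vecOf n b := by
  have := (vecOf_eq_zero (F := F) hn).2 h
  rw [map_sub] at this
  exact sub_eq_zero.1 this

def ofVec (n : ℕ) (x : Fin n → F) : F[X] := ∑ i : Fin n, monomial (i : ℕ) (x i)

lemma ofVec_degree (x : Fin n → F) : (ofVec n x).degree < n := by
  apply lt_of_le_of_lt (degree_sum_le _ _)
  rw [Finset.sup_lt_iff (by exact_mod_cast WithBot.bot_lt_coe n)]
  intro i _
  exact lt_of_le_of_lt (degree_monomial_le _ _) (by exact_mod_cast i.isLt)

lemma ofVec_coeff (x : Fin n → F) (i : Fin n) : (ofVec n x).coeff i = x i := by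
  rw [ofVec, finset_sum_coeff]
  simp only [coeff_monomial]
  rw [Finset.sum_eq_single i]
  · simp
  · intro b _ hb; simp [Fin.val_eq_val, hb]
  · simp

lemma vecOf_ofVec (hn : 0 < n) (x : Fin n → F) : vecOf n (ofVec n x) = x := by
  funext i
  show ((ofVec n x) %ₘ (X ^ n - 1)).coeff i = x i
  rw [(modByMonic_eq_self_iff (M_monic hn)).2 (by rw [M_degree hn]; exact ofVec_degree x),
    ofVec_coeff]

lemma vecOf_of_degree_lt (hn : 0 < n) {a : F[X]} (h : a.degree < n) (i : Fin n) :
    vecOf n a i = a.coeff i := by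
  show (a %ₘ (X ^ n - 1)).coeff i = a.coeff i
  rw [(modByMonic_eq_self_iff (M_monic hn)).2 (by rw [M_degree hn]; exact h)]

lemma reflect_reflect' (N : ℕ) (p : F[X]) : reflect N (reflect N p) = p := by
  ext i; rw [coeff_reflect, coeff_reflect, revAt_invol]

lemma natDegree_reflect_le {N : ℕ} {p : F[X]} (hp : p.natDegree ≤ N) :
    (reflect N p).natDegree ≤ N := by
  apply natDegree_le_iff_coeff_eq_zero.2
  intro k hk
  rw [coeff_reflect]
  apply coeff_eq_zero_of_natDegree_lt
  have h2 : revAt N k = k := by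
    exact revAt_eq_self_of_lt (by omega)
  rw [h2]; omega

lemma mod_eq_of_dvd_sub (hn : 0 < n) {a b : F[X]} (h : (X ^ n - 1 : F[X]) ∣ a - b) :
    a %ₘ (X ^ n - 1) = b %ₘ (X ^ n - 1) := by
  have h0 : (a - b) %ₘ (X ^ n - 1) = 0 := (modByMonic_eq_zero_iff_dvd (M_monic hn)).2 h
  have h1 := map_sub (modByMonicHom (X ^ n - 1 : F[X])) a b
  simp only [modByMonicHom_apply] at h1
  rw [h0] at h1
  exact (sub_eq_zero.1 h1.symm)

lemma M_ne_one (hn : 0 < n) : (X ^ n - 1 : F[X]) ≠ 1 := by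
  intro h
  have := M_degree (F := F) hn
  rw [h, degree_one] at this
  exact hn.ne' (by exact_mod_cast this.symm)

lemma coeff_mod_zero (hn : 0 < n) {y : F[X]} (hy : y.natDegree < 2 * n) :
    (y %ₘ (X ^ n - 1)).coeff 0 = y.coeff 0 + y.coeff n := by
  have hMm := M_monic (F := F) hn
  have hmd := modByMonic_add_div y (X ^ n - 1)
  have hq : (y /ₘ (X ^ n - 1)).natDegree < n := by
    rw [natDegree_divByMonic y hMm, M_natDegree hn]; omega
  have hMc0 : (X ^ n - 1 : F[X]).coeff 0 = -1 := by
    simp [coeff_X_pow, hn.ne]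
  have hr : (y %ₘ (X ^ n - 1)).coeff n = 0 :=
    coeff_eq_zero_of_degree_lt
      (lt_of_lt_of_le (degree_modByMonic_lt y hMm) (by rw [M_degree hn]))
  have hXq : ((X ^ n - 1 : F[X]) * (y /ₘ (X ^ n - 1))).coeff n
      = (y /ₘ (X ^ n - 1)).coeff 0 := by
    rw [sub_mul, one_mul, coeff_sub]
    have h1 : ((X : F[X]) ^ n * (y /ₘ (X ^ n - 1))).coeff (0 + n)
        = (y /ₘ (X ^ n - 1)).coeff 0 := coeff_X_pow_mul _ _ _
    rw [zero_add] at h1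
    rw [h1, coeff_eq_zero_of_natDegree_lt hq, sub_zero]
  have h0 : y.coeff 0 = (y %ₘ (X ^ n - 1)).coeff 0 - (y /ₘ (X ^ n - 1)).coeff 0 := by
    conv_lhs => rw [← hmd]
    rw [coeff_add, mul_coeff_zero, hMc0]; ring
  have hcn : y.coeff n = (y /ₘ (X ^ n - 1)).coeff 0 := by
    conv_lhs => rw [← hmd]
    rw [coeff_add, hr, hXq, zero_add]
  rw [h0, hcn]; ring

lemma natDegree_mod_lt (hn : 0 < n) (w : F[X]) : (w %ₘ (X ^ n - 1)).natDegree < n := by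
  have := natDegree_modByMonic_lt w (M_monic (F := F) hn) (M_ne_one hn)
  rwa [M_natDegree hn] at this

lemma eInn_vecOf (hn : 0 < n) (x : Fin n → F) (w : F[X]) :
    eInn x (vecOf n w) = ((reflect n (ofVec n x) * w) %ₘ (X ^ n - 1)).coeff 0 := by
  set u := ofVec n x with hu
  set r := w %ₘ (X ^ n - 1) with hr
  have hund : u.natDegree ≤ n := by
    rcases eq_or_ne u 0 with h | h
    · simp [h]
    · exact le_of_lt ((natDegree_lt_iff_degree_lt h).2 (ofVec_degree x))
  have hrnd : r.natDegree < n := natDegree_mod_lt hn w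
  have hw : (reflect n u * w) %ₘ (X ^ n - 1) = (reflect n u * r) %ₘ (X ^ n - 1) := by
    apply _root_.mod_eq_of_dvd_sub hn
    rw [← mul_sub]
    apply Dvd.dvd.mul_left
    exact ⟨w /ₘ (X ^ n - 1), by
      have := modByMonic_add_div w (X ^ n - 1 : F[X]); linear_combination -this⟩
  rw [hw, coeff_mod_zero hn (lt_of_le_of_lt natDegree_mul_le
    (by have := natDegree_reflect_le hund; omega))]
  have hc0 : (reflect n u * r).coeff 0 = 0 := by
    rw [mul_coeff_zero, coeff_reflect, revAt_le (Nat.zero_le n), Nat.sub_zero,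
      coeff_eq_zero_of_degree_lt (ofVec_degree x), zero_mul]
  have hcn : (reflect n u * r).coeff n = ∑ i : Fin n, x i * r.coeff i := by
    rw [coeff_mul, Finset.Nat.sum_antidiagonal_eq_sum_range_succ_mk]
    rw [Finset.sum_congr rfl (fun k hk => by
      have hk' := Finset.mem_range.1 hk
      rw [coeff_reflect, revAt_le (by omega : k ≤ n)])]
    have hrefl := Finset.sum_range_reflect (fun j => u.coeff j * r.coeff j) (n + 1)
    simp only [Nat.add_sub_cancel] at hrefl
    rw [hrefl]
    rw [Finset.sum_range_succ, coeff_eq_zero_of_degree_lt (ofVec_degree x), zero_mul, add_zero]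
    rw [← Fin.sum_univ_eq_sum_range (fun j => u.coeff j * r.coeff j) n]
    exact Finset.sum_congr rfl (fun i _ => by rw [ofVec_coeff])
  rw [hc0, hcn, zero_add]
  rfl

lemma dvd_of_forall_coeff_zero (hn : 0 < n) {z : F[X]}
    (hz : ∀ a : F[X], ((z * a) %ₘ (X ^ n - 1)).coeff 0 = 0) : (X ^ n - 1 : F[X]) ∣ z := by
  rw [← vecOf_eq_zero hn]
  funext i
  show (z %ₘ (X ^ n - 1)).coeff i = 0
  set r := z %ₘ (X ^ n - 1) with hr
  have hrnd : r.natDegree < n := natDegree_mod_lt hn z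
  have key := hz (X ^ (n - (i : ℕ)))
  have hmod : (z * X ^ (n - (i : ℕ))) %ₘ (X ^ n - 1)
      = (r * X ^ (n - (i : ℕ))) %ₘ (X ^ n - 1) := by
    apply _root_.mod_eq_of_dvd_sub hn
    rw [← sub_mul]
    apply Dvd.dvd.mul_right
    exact ⟨z /ₘ (X ^ n - 1), by
      have := modByMonic_add_div z (X ^ n - 1 : F[X]); linear_combination -this⟩
  rw [hmod, coeff_mod_zero hn (lt_of_le_of_lt natDegree_mul_le
    (by have : (X ^ (n - (i : ℕ)) : F[X]).natDegree ≤ n := by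
          rw [natDegree_X_pow]; omega
        omega))] at key
  have h1 : (r * X ^ (n - (i : ℕ))).coeff 0 = 0 := by
    rw [coeff_mul_X_pow', if_neg (by omega)]
  have h2 : (r * X ^ (n - (i : ℕ))).coeff n = r.coeff i := by
    rw [coeff_mul_X_pow', if_pos (by omega)]
    congr 1; omega
  rw [h1, h2, zero_add] at key
  exact key

lemma M_reflect (hn : 0 < n) : reflect n (X ^ n - 1 : F[X]) = -(X ^ n - 1) := by
  rw [reflect_sub, reflect_one, reflect_monomial, revAt_le (le_refl n), Nat.sub_self, pow_zero]
  ring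

lemma M_dvd_reflect (hn : 0 < n) {N : ℕ} (hN : n ≤ N) {z : F[X]} (hz : z.natDegree ≤ N)
    (h : (X ^ n - 1 : F[X]) ∣ z) : (X ^ n - 1 : F[X]) ∣ reflect N z := by
  obtain ⟨c, rfl⟩ := h
  rcases eq_or_ne c 0 with rfl | hc
  · simp
  have hM0 : (X ^ n - 1 : F[X]) ≠ 0 := (M_monic hn).ne_zero
  have hnd : ((X ^ n - 1 : F[X]) * c).natDegree = n + c.natDegree := by
    rw [natDegree_mul hM0 hc, M_natDegree hn]
  have hcN : c.natDegree ≤ N - n := by omega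
  have hrm := reflect_mul (X ^ n - 1 : F[X]) c (le_of_eq (M_natDegree hn)) hcN
  rw [show n + (N - n) = N from by omega] at hrm
  rw [hrm, M_reflect hn]
  exact ⟨-(reflect (N - n) c), by ring⟩

lemma M_dvd_of_reflect (hn : 0 < n) {N : ℕ} (hN : n ≤ N) {z : F[X]} (hz : z.natDegree ≤ N)
    (h : (X ^ n - 1 : F[X]) ∣ reflect N z) : (X ^ n - 1 : F[X]) ∣ z := by
  have := M_dvd_reflect hn hN (natDegree_reflect_le hz) h
  rwa [reflect_reflect'] at this

lemma isCoprime_of_gcd_eq_one {a b : F[X]} (h : GCDMonoid.gcd a b = 1) : IsCoprime a b :=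
  (gcd_isUnit_iff a b).1 (h ▸ isUnit_one)

lemma isCoprime_X_pow {p : F[X]} (hp : p.coeff 0 ≠ 0) (k : ℕ) : IsCoprime p (X ^ k) :=
  IsCoprime.pow_right (((Polynomial.prime_X (R := F)).coprime_iff_not_dvd.2
    (fun hd => hp (Polynomial.X_dvd_iff.1 hd))).symm)

/-- `X^n - 1 = g * (M /ₘ g)` for monic divisors. -/
lemma M_eq_mul (hn : 0 < n) {g : F[X]} (hg : g.Monic) (hgdvd : g ∣ (X ^ n - 1 : F[X])) :
    (X ^ n - 1 : F[X]) = g * ((X ^ n - 1 : F[X]) /ₘ g) := by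
  conv_lhs => rw [← modByMonic_add_div (X ^ n - 1 : F[X]) g]
  rw [(modByMonic_eq_zero_iff_dvd hg).2 hgdvd, zero_add]

lemma quot_monic (hn : 0 < n) {g : F[X]} (hg : g.Monic) (hgdvd : g ∣ (X ^ n - 1 : F[X])) :
    ((X ^ n - 1 : F[X]) /ₘ g).Monic :=
  hg.of_mul_monic_left (by rw [← M_eq_mul hn hg hgdvd]; exact M_monic hn)

lemma reflect_eq_reverse_mul (hn : 0 < n) {g : F[X]} (hgn : g.natDegree ≤ n) :
    reflect n g = reverse g * X ^ (n - g.natDegree) := by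
  have := reflect_mul g (1 : F[X]) (le_refl g.natDegree)
    (by simp : (1 : F[X]).natDegree ≤ n - g.natDegree)
  rw [mul_one, show g.natDegree + (n - g.natDegree) = n from by omega, reflect_one] at this
  rw [this, reverse]

/-- key divisibility transfer: `M ∣ u * reflect n g` implies `perpPoly n g ∣ u`. -/
lemma perpPoly_dvd_of (hn : 0 < n) {g : F[X]} (hg : g.Monic)
    (hgdvd : g ∣ (X ^ n - 1 : F[X])) {u : F[X]}
    (h : (X ^ n - 1 : F[X]) ∣ u * reflect n g) : perpPoly n g ∣ u := by
  set G := (X ^ n - 1 : F[X]) /ₘ g with hG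
  have hGm : G.Monic := quot_monic hn hg hgdvd
  have hMeq : (X ^ n - 1 : F[X]) = g * G := M_eq_mul hn hg hgdvd
  have hgn : g.natDegree ≤ n := by
    have := natDegree_le_natDegree (degree_le_of_dvd hgdvd (M_monic (F := F) hn).ne_zero)
    rwa [M_natDegree hn] at this
  have hMrev : (X ^ n - 1 : F[X]) = reverse g * (-(reverse G)) := by
    have h1 : reverse ((X ^ n - 1 : F[X])) = reverse g * reverse G := by
      rw [hMeq]; exact reverse_mul (by rw [hg.leadingCoeff, hGm.leadingCoeff, one_mul]; exact one_ne_zero)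
    have h2 : reverse ((X ^ n - 1 : F[X])) = -(X ^ n - 1 : F[X]) := by
      rw [reverse, M_natDegree hn, M_reflect hn]
    rw [h2] at h1
    linear_combination -h1
  obtain ⟨c, hc⟩ := h
  rw [reflect_eq_reverse_mul hn hgn, hMrev] at hc
  have hrg0 : reverse g ≠ 0 := fun h0 => hg.ne_zero (reverse_eq_zero.1 h0)
  have hcancel : u * X ^ (n - g.natDegree) = -(reverse G) * c :=
    mul_left_cancel₀ hrg0 (by linear_combination hc)
  have hdvd : reverse G ∣ u * X ^ (n - g.natDegree) := ⟨-c, by linear_combination hcancel⟩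
  have hcop : IsCoprime (reverse G) (X ^ (n - g.natDegree)) :=
    isCoprime_X_pow (by rw [coeff_zero_reverse, hGm.leadingCoeff]; exact one_ne_zero) _
  exact hcop.dvd_of_dvd_mul_right hdvd

lemma natDegree_lt_of_degree_lt (hn : 0 < n) {p : F[X]} (h : p.degree < (n : ℕ)) :
    p.natDegree < n := by
  rcases eq_or_ne p 0 with rfl | hp
  · simpa using hn
  · exact (natDegree_lt_iff_degree_lt hp).2 h

lemma sInn_eq (x y : (Fin n → F) × (Fin n → F)) :
    sInn x y = eInn x.1 y.2 - eInn x.2 y.1 := by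
  rw [sInn, eInn, eInn, Finset.sum_sub_distrib]

lemma part1 (hn : 0 < n) (f g h : F[X])
    (hf : f.Monic) (hg : g.Monic)
    (hfd : f.degree < (n : ℕ)) (hgd : g.degree < (n : ℕ)) (hhd : h.degree < (n : ℕ))
    (hfdvd : f ∣ X ^ n - 1) (hgdvd : g ∣ X ^ n - 1)
    (hd1 : f ∣ g) (hd2 : g ∣ perpPoly n g) (hd3 : perpPoly n g ∣ perpPoly n f) :
    sDualSet (QCcode n f g h : Set ((Fin n → F) × (Fin n → F))) ⊆
      (QCcode n f g h : Set ((Fin n → F) × (Fin n → F))) := by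
  intro x hx
  set u := ofVec n x.1 with hu
  set v := ofVec n x.2 with hv
  have hund : u.natDegree ≤ n := le_of_lt (natDegree_lt_of_degree_lt hn (ofVec_degree x.1))
  have hvnd : v.natDegree ≤ n := le_of_lt (natDegree_lt_of_degree_lt hn (ofVec_degree x.2))
  have hgnd : g.natDegree ≤ n := le_of_lt (natDegree_lt_of_degree_lt hn hgd)
  have hfnd : f.natDegree ≤ n := le_of_lt (natDegree_lt_of_degree_lt hn hfd)
  have hhnd : h.natDegree ≤ n := le_of_lt (natDegree_lt_of_degree_lt hn hhd)
  have hmem : ∀ a b : F[X], sInn x (vecOf n (a * f), vecOf n (a * h * f + b * g)) = 0 :=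
    fun a b => hx _ ⟨a, b, rfl⟩
  -- condition (ii)
  have hii : (X ^ n - 1 : F[X]) ∣ reflect n u * g := by
    apply dvd_of_forall_coeff_zero hn
    intro b
    have h1 := hmem 0 b
    rw [sInn_eq] at h1
    simp only [zero_mul, zero_add, map_zero] at h1
    have he2 : eInn x.2 (0 : Fin n → F) = 0 := by simp [eInn]
    rw [he2, sub_zero, eInn_vecOf hn] at h1
    rw [show reflect n u * g * b = reflect n (ofVec n x.1) * (b * g) from by rw [← hu]; ring]
    exact h1
  -- condition (iii)
  have hiii : (X ^ n - 1 : F[X]) ∣ (reflect n u * h - reflect n v) * f := by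
    apply dvd_of_forall_coeff_zero hn
    intro a
    have h1 := hmem a 0
    rw [sInn_eq] at h1
    simp only [zero_mul, add_zero] at h1
    rw [eInn_vecOf hn, eInn_vecOf hn] at h1
    have e : (reflect n u * h - reflect n v) * f * a
        = reflect n (ofVec n x.1) * (a * h * f) - reflect n (ofVec n x.2) * (a * f) := by
      rw [← hu, ← hv]; ring
    rw [e]
    have hsub := map_sub (modByMonicHom (X ^ n - 1 : F[X]))
      (reflect n (ofVec n x.1) * (a * h * f)) (reflect n (ofVec n x.2) * (a * f))
    simp only [modByMonicHom_apply] at hsub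
    rw [hsub, coeff_sub]
    rw [sub_eq_zero] at h1 ⊢
    exact h1
  -- translate (ii)
  have hii' : (X ^ n - 1 : F[X]) ∣ u * reflect n g := by
    apply M_dvd_of_reflect hn (by omega : n ≤ 2 * n)
      (le_trans natDegree_mul_le (by have := natDegree_reflect_le hgnd; omega))
    have hrm := reflect_mul u (reflect n g) hund (natDegree_reflect_le hgnd)
    rw [reflect_reflect'] at hrm
    rw [show 2 * n = n + n from by ring, hrm]
    exact hii
  -- translate (iii)
  have hiii' : (X ^ n - 1 : F[X]) ∣ (u * reflect n h - v * X ^ n) * reflect n f := by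
    have hbound : ((u * reflect n h - v * X ^ n) * reflect n f).natDegree ≤ 3 * n := by
      apply le_trans natDegree_mul_le
      have h1 := natDegree_reflect_le hfnd
      have h2 := natDegree_reflect_le hhnd
      have h3 : (u * reflect n h - v * X ^ n).natDegree ≤ 2 * n := by
        apply le_trans (natDegree_sub_le _ _)
        have h4 : (u * reflect n h).natDegree ≤ 2 * n := le_trans natDegree_mul_le (by omega)
        have h5 : (v * X ^ n).natDegree ≤ 2 * n :=
          le_trans natDegree_mul_le (by rw [natDegree_X_pow]; omega)
        omega
      omega
    apply M_dvd_of_reflect hn (by omega : n ≤ 3 * n) hbound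
    -- compute the reflect
    have t1 : reflect (3 * n) (u * (reflect n h * reflect n f)) = reflect n u * (h * f) := by
      have hin : (reflect n h * reflect n f).natDegree ≤ 2 * n :=
        le_trans natDegree_mul_le
          (by have := natDegree_reflect_le hhnd; have := natDegree_reflect_le hfnd; omega)
      have houter := reflect_mul u (reflect n h * reflect n f) hund hin
      rw [show n + 2 * n = 3 * n from by ring] at houter
      have hinner := reflect_mul (reflect n h) (reflect n f)
        (natDegree_reflect_le hhnd) (natDegree_reflect_le hfnd)
      rw [show n + n = 2 * n from by ring, reflect_reflect', reflect_reflect'] at hinner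
      rw [houter, hinner]
    have t2 : reflect (3 * n) ((v * X ^ n) * reflect n f) = reflect n v * f := by
      have hvx : (v * X ^ n).natDegree ≤ 2 * n :=
        le_trans natDegree_mul_le (by rw [natDegree_X_pow]; omega)
      have houter := reflect_mul (v * X ^ n) (reflect n f) hvx (natDegree_reflect_le hfnd)
      rw [show 2 * n + n = 3 * n from by ring, reflect_reflect'] at houter
      have hinner := reflect_mul v (X ^ n) hvnd (le_of_eq (natDegree_X_pow n))
      rw [show n + n = 2 * n from by ring, reflect_monomial, revAt_le (le_refl n),
        Nat.sub_self, pow_zero, mul_one] at hinner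
      rw [houter, hinner]
    have hsplit : (u * reflect n h - v * X ^ n) * reflect n f
        = u * (reflect n h * reflect n f) - (v * X ^ n) * reflect n f := by ring
    rw [hsplit, reflect_sub, t1, t2]
    have : (reflect n u * h - reflect n v) * f = reflect n u * (h * f) - reflect n v * f := by
      ring
    rw [this] at hiii
    exact hiii
  -- perpPoly divisibilities
  have hpg : perpPoly n g ∣ u := perpPoly_dvd_of hn hg hgdvd hii'
  have hpf : perpPoly n f ∣ u * reflect n h - v * X ^ n := perpPoly_dvd_of hn hf hfdvd hiii'
  have hgu : g ∣ u := dvd_trans hd2 hpg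
  have hg0 : g.coeff 0 ≠ 0 := by
    intro h0
    have hXg : (X : F[X]) ∣ X ^ n - 1 := dvd_trans (X_dvd_iff.2 h0) hgdvd
    have hc := X_dvd_iff.1 hXg
    rw [coeff_sub, coeff_X_pow, if_neg (by omega), coeff_one, if_pos rfl] at hc
    simp at hc
  have hgv : g ∣ v := by
    have h1 : g ∣ u * reflect n h - v * X ^ n := dvd_trans hd2 (dvd_trans hd3 hpf)
    have h2 : g ∣ v * X ^ n := by
      have := dvd_sub (hgu.mul_right (reflect n h)) h1
      rwa [show u * reflect n h - (u * reflect n h - v * X ^ n) = v * X ^ n from by ring] at this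
    exact (isCoprime_X_pow hg0 n).dvd_of_dvd_mul_right h2
  obtain ⟨a, ha⟩ := dvd_trans hd1 hgu
  obtain ⟨b, hb⟩ : g ∣ v - u * h := dvd_sub hgv (hgu.mul_right h)
  refine ⟨a, b, ?_⟩
  have hx1 : x.1 = vecOf n (a * f) := by
    rw [show a * f = u from by rw [ha]; ring, hu, vecOf_ofVec hn]
  have hx2 : x.2 = vecOf n (a * h * f + b * g) := by
    have he : a * h * f + b * g = v := by
      have h1 : a * h * f = u * h := by rw [ha]; ring
      have h2 : b * g = v - u * h := by linear_combination -hb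
      rw [h1, h2]; ring
    rw [he, hv, vecOf_ofVec hn]
  exact Prod.ext hx1 hx2

def ofVecL (k : ℕ) : (Fin k → F) →ₗ[F] F[X] :=
  ∑ i : Fin k, (Polynomial.monomial (R := F) (i : ℕ)).comp (LinearMap.proj i)

lemma ofVecL_apply (k : ℕ) (x : Fin k → F) : ofVecL k x = ofVec k x := by
  simp [ofVecL, ofVec, LinearMap.sum_apply]

lemma ofVec_coeffs {k : ℕ} {p : F[X]} (hp : p.degree < (k : ℕ)) :
    ofVec k (fun i => p.coeff i) = p := by
  ext j
  rcases lt_or_ge j k with hj | hj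
  · exact ofVec_coeff (fun i : Fin k => p.coeff i) ⟨j, hj⟩
  · rw [coeff_eq_zero_of_degree_lt (lt_of_lt_of_le (ofVec_degree _)
      (by exact_mod_cast hj)),
      coeff_eq_zero_of_degree_lt (lt_of_lt_of_le hp (by exact_mod_cast hj))]

lemma ofVec_eq_zero_iff {k : ℕ} {x : Fin k → F} : ofVec k x = 0 ↔ x = 0 := by
  constructor
  · intro h0
    funext i
    have := ofVec_coeff x i
    rw [h0, coeff_zero] at this
    exact this.symm
  · rintro rfl; simp [ofVec]

def QCmap (n : ℕ) (f g h : F[X]) (k l : ℕ) :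
    ((Fin k → F) × (Fin l → F)) →ₗ[F] ((Fin n → F) × (Fin n → F)) :=
  LinearMap.prod
    ((vecOf n).comp ((LinearMap.mulRight F f).comp ((ofVecL k).comp (LinearMap.fst F _ _))))
    ((vecOf n).comp
      (((LinearMap.mulRight F (h * f)).comp ((ofVecL k).comp (LinearMap.fst F _ _)))
        + ((LinearMap.mulRight F g).comp ((ofVecL l).comp (LinearMap.snd F _ _)))))

lemma QCmap_apply (n : ℕ) (f g h : F[X]) (k l : ℕ) (x : Fin k → F) (y : Fin l → F) :
    QCmap n f g h k l (x, y)
      = (vecOf n (ofVec k x * f), vecOf n (ofVec k x * (h * f) + ofVec l y * g)) := by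
  simp [QCmap, ofVecL_apply, LinearMap.mulRight_apply, mul_assoc]

lemma QCmap_range (hn : 0 < n) (f g h : F[X]) (hf : f.Monic) (hg : g.Monic)
    (hfdvd : f ∣ X ^ n - 1) (hgdvd : g ∣ X ^ n - 1) :
    LinearMap.range (QCmap n f g h (n - f.natDegree) (n - g.natDegree))
      = QCcode n f g h := by
  set F' : F[X] := (X ^ n - 1) /ₘ f with hF'
  set G' : F[X] := (X ^ n - 1) /ₘ g with hG'
  have hMf : (X ^ n - 1 : F[X]) = f * F' := M_eq_mul hn hf hfdvd
  have hMg : (X ^ n - 1 : F[X]) = g * G' := M_eq_mul hn hg hgdvd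
  have hF'm : F'.Monic := quot_monic hn hf hfdvd
  have hG'm : G'.Monic := quot_monic hn hg hgdvd
  have hF'nd : F'.natDegree = n - f.natDegree := by
    rw [hF', natDegree_divByMonic _ hf, M_natDegree hn]
  have hG'nd : G'.natDegree = n - g.natDegree := by
    rw [hG', natDegree_divByMonic _ hg, M_natDegree hn]
  apply le_antisymm
  · rintro w ⟨⟨xa, xb⟩, rfl⟩
    rw [QCmap_apply]
    exact ⟨ofVec _ xa, ofVec _ xb, by rw [mul_assoc]⟩
  · rintro w ⟨a, b, rfl⟩
    set a0 := a %ₘ F' with ha0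
    set b0 := b %ₘ G' with hb0
    have hqa : a0 + F' * (a /ₘ F') = a := modByMonic_add_div a F'
    have hqb : b0 + G' * (b /ₘ G') = b := modByMonic_add_div b G'
    have ha0d : a0.degree < ((n - f.natDegree : ℕ) : WithBot ℕ) := by
      have := degree_modByMonic_lt a hF'm
      rwa [degree_eq_natDegree hF'm.ne_zero, hF'nd] at this
    have hb0d : b0.degree < ((n - g.natDegree : ℕ) : WithBot ℕ) := by
      have := degree_modByMonic_lt b hG'm
      rwa [degree_eq_natDegree hG'm.ne_zero, hG'nd] at this
    refine ⟨((fun i => a0.coeff i), (fun i => b0.coeff i)), ?_⟩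
    rw [QCmap_apply, ofVec_coeffs ha0d, ofVec_coeffs hb0d]
    have hc1 : vecOf n (a0 * f) = vecOf n (a * f) := by
      apply vecOf_congr hn
      exact ⟨-(a /ₘ F'), by linear_combination f * hqa + (a /ₘ F') * hMf⟩
    have hc2 : vecOf n (a0 * (h * f) + b0 * g) = vecOf n (a * h * f + b * g) := by
      apply vecOf_congr hn
      exact ⟨-((a /ₘ F') * h) - (b /ₘ G'), by
        linear_combination (h * f) * hqa + ((a /ₘ F') * h) * hMf + g * hqb + (b /ₘ G') * hMg⟩
    rw [hc1, hc2]

lemma QCmap_inj (hn : 0 < n) (f g h : F[X]) (hf0 : f ≠ 0) (hg0 : g ≠ 0)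
    (hfd : f.degree < (n : ℕ)) (hgd : g.degree < (n : ℕ)) :
    Function.Injective (QCmap n f g h (n - f.natDegree) (n - g.natDegree)) := by
  have hdf : f.natDegree < n := natDegree_lt_of_degree_lt hn hfd
  have hdg : g.natDegree < n := natDegree_lt_of_degree_lt hn hgd
  rw [injective_iff_map_eq_zero]
  rintro ⟨xa, xb⟩ hz
  rw [QCmap_apply] at hz
  have hz1 := congrArg Prod.fst hz
  have hz2 := congrArg Prod.snd hz
  simp only [Prod.fst_zero, Prod.snd_zero] at hz1 hz2
  have hA : ofVec (n - f.natDegree) xa = 0 := by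
    by_contra hA0
    have hdvd := (vecOf_eq_zero hn).1 hz1
    have hne : ofVec (n - f.natDegree) xa * f ≠ 0 := mul_ne_zero hA0 hf0
    have hdeg : (ofVec (n - f.natDegree) xa * f).degree < (X ^ n - 1 : F[X]).degree := by
      rw [M_degree hn, degree_mul]
      have d1 : (ofVec (n - f.natDegree) xa).degree < ((n - f.natDegree : ℕ) : WithBot ℕ) :=
        ofVec_degree xa
      have d2 : f.degree ≤ (f.natDegree : WithBot ℕ) := degree_le_natDegree
      calc (ofVec (n - f.natDegree) xa).degree + f.degree
          < ((n - f.natDegree : ℕ) : WithBot ℕ) + (f.natDegree : WithBot ℕ) := by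
            apply WithBot.add_lt_add_of_lt_of_le _ d1 d2
            exact fun h0 => hf0 (degree_eq_bot.1 h0)
        _ = ((n : ℕ) : WithBot ℕ) := by
            rw [← Nat.cast_add]
            congr 1
            omega
    exact hne (eq_zero_of_dvd_of_degree_lt hdvd hdeg)
  rw [hA, zero_mul, zero_add] at hz2
  have hB : ofVec (n - g.natDegree) xb = 0 := by
    by_contra hB0
    have hdvd := (vecOf_eq_zero hn).1 hz2
    have hne : ofVec (n - g.natDegree) xb * g ≠ 0 := mul_ne_zero hB0 hg0
    have hdeg : (ofVec (n - g.natDegree) xb * g).degree < (X ^ n - 1 : F[X]).degree := by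
      rw [M_degree hn, degree_mul]
      have d1 : (ofVec (n - g.natDegree) xb).degree < ((n - g.natDegree : ℕ) : WithBot ℕ) :=
        ofVec_degree xb
      have d2 : g.degree ≤ (g.natDegree : WithBot ℕ) := degree_le_natDegree
      calc (ofVec (n - g.natDegree) xb).degree + g.degree
          < ((n - g.natDegree : ℕ) : WithBot ℕ) + (g.natDegree : WithBot ℕ) := by
            apply WithBot.add_lt_add_of_lt_of_le _ d1 d2
            exact fun h0 => hg0 (degree_eq_bot.1 h0)
        _ = ((n : ℕ) : WithBot ℕ) := by
            rw [← Nat.cast_add]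
            congr 1
            omega
    exact hne (eq_zero_of_dvd_of_degree_lt hdvd hdeg)
  have hxa : xa = 0 := ofVec_eq_zero_iff.1 hA
  have hxb : xb = 0 := ofVec_eq_zero_iff.1 hB
  simp_all

lemma part2 (hn : 0 < n) (f g h : F[X]) (hf : f.Monic) (hg : g.Monic)
    (hfd : f.degree < (n : ℕ)) (hgd : g.degree < (n : ℕ))
    (hfdvd : f ∣ X ^ n - 1) (hgdvd : g ∣ X ^ n - 1) :
    Module.finrank F (QCcode n f g h) = 2 * n - f.natDegree - g.natDegree := by
  have hdf : f.natDegree < n := natDegree_lt_of_degree_lt hn hfd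
  have hdg : g.natDegree < n := natDegree_lt_of_degree_lt hn hgd
  rw [← QCmap_range hn f g h hf hg hfdvd hgdvd]
  rw [LinearMap.finrank_range_of_inj (QCmap_inj hn f g h hf.ne_zero hg.ne_zero hfd hgd)]
  rw [Module.finrank_prod, Module.finrank_fin_fun, Module.finrank_fin_fun]
  omega


lemma hWt_eq_card (x : Fin n → F) :
    hWt x = (Finset.univ.filter (fun i => x i ≠ 0)).card := by
  rw [hWt, Nat.card_eq_fintype_card, Fintype.card_subtype]

lemma sWt_eq_card (v : (Fin n → F) × (Fin n → F)) :
    sWt v = (Finset.univ.filter (fun i => (v.1 i, v.2 i) ≠ (0, 0))).card := by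
  rw [sWt, Nat.card_eq_fintype_card, Fintype.card_subtype]

lemma hWt_le_sWt_fst (v : (Fin n → F) × (Fin n → F)) : hWt v.1 ≤ sWt v := by
  rw [hWt_eq_card, sWt_eq_card]
  apply Finset.card_le_card
  intro i hi
  rw [Finset.mem_filter] at hi ⊢
  exact ⟨hi.1, fun hpair => hi.2 (by have := congrArg Prod.fst hpair; simpa using this)⟩

lemma hWt_le_sWt_snd (v : (Fin n → F) × (Fin n → F)) : hWt v.2 ≤ sWt v := by
  rw [hWt_eq_card, sWt_eq_card]
  apply Finset.card_le_card
  intro i hi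
  rw [Finset.mem_filter] at hi ⊢
  exact ⟨hi.1, fun hpair => hi.2 (by have := congrArg Prod.snd hpair; simpa using this)⟩

lemma cycDist_le {u z : F[X]} (hdvd : u ∣ z) (hne : vecOf n z ≠ 0) :
    cycDist n u ≤ hWt (vecOf n z) := by
  obtain ⟨c, rfl⟩ := hdvd
  apply Nat.sInf_le
  exact ⟨c, by rwa [mul_comm c u], by rw [mul_comm c u]⟩

lemma point_count [Fintype F] (s t : F) :
    ((if s ≠ 0 then 1 else 0) : ℕ) + ∑ β : F, ((if t - β * s ≠ 0 then 1 else 0) : ℕ)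
      = Fintype.card F * (if (s, t) ≠ ((0 : F), (0 : F)) then 1 else 0) := by
  rcases eq_or_ne s 0 with rfl | hs
  · rcases eq_or_ne t 0 with rfl | ht
    · simp
    · simp [ht, Prod.ext_iff, Finset.card_univ]
  · have hfilter : Finset.univ.filter (fun β : F => ¬(t - β * s ≠ 0)) = {t / s} := by
      ext β
      simp only [Finset.mem_filter, Finset.mem_univ, true_and, not_not,
        Finset.mem_singleton, sub_eq_zero]
      constructor
      · intro hb
        rw [eq_div_iff hs]
        exact hb.symm
      · rintro rfl
        rw [div_mul_cancel₀ t hs]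
    have hcards := Finset.card_filter_add_card_filter_not
      (s := (Finset.univ : Finset F)) (p := fun β : F => t - β * s ≠ 0)
    rw [hfilter, Finset.card_singleton, Finset.card_univ] at hcards
    have hsum : ∑ β : F, ((if t - β * s ≠ 0 then 1 else 0) : ℕ)
        = Fintype.card F - 1 := by
      rw [← Finset.card_filter]
      omega
    have hpair : (s, t) ≠ ((0 : F), (0 : F)) := by
      intro hp
      exact hs (by have := congrArg Prod.fst hp; simpa using this)
    rw [hsum, if_pos hs, if_pos hpair, mul_one]
    have : 1 ≤ Fintype.card F := Fintype.card_pos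
    omega

lemma count_identity [Fintype F] (c1 c2 : Fin n → F) :
    hWt c1 + ∑ β : F, hWt (c2 - β • c1) = Fintype.card F * sWt (c1, c2) := by
  have h1 : hWt c1 = ∑ i : Fin n, ((if c1 i ≠ 0 then 1 else 0) : ℕ) := by
    rw [hWt_eq_card, Finset.card_filter]
  have h2 : ∀ β : F, hWt (c2 - β • c1)
      = ∑ i : Fin n, ((if c2 i - β * c1 i ≠ 0 then 1 else 0) : ℕ) := by
    intro β
    rw [hWt_eq_card, Finset.card_filter]
    apply Finset.sum_congr rfl
    intro i _
    simp [Pi.sub_apply, Pi.smul_apply, smul_eq_mul, sub_eq_zero]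
  have h3 : sWt (c1, c2)
      = ∑ i : Fin n, ((if (c1 i, c2 i) ≠ ((0 : F), (0 : F)) then 1 else 0) : ℕ) := by
    rw [sWt_eq_card, Finset.card_filter]
  have h2' : ∑ β : F, hWt (c2 - β • c1)
      = ∑ β : F, ∑ i : Fin n, ((if c2 i - β * c1 i ≠ 0 then 1 else 0) : ℕ) :=
    Finset.sum_congr rfl (fun β _ => h2 β)
  rw [h1, h3, h2', Finset.sum_comm, Finset.mul_sum, ← Finset.sum_add_distrib]
  exact Finset.sum_congr rfl (fun i _ => point_count (c1 i) (c2 i))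

lemma part3 [Fintype F] (hn : 0 < n) (f g h : F[X])
    (hgdvd : g ∣ X ^ n - 1)
    (hcop : ∀ β : F, β ≠ 0 → GCDMonoid.gcd (h - C β) (X ^ n - 1) = 1) :
    ∀ v ∈ QCcode n f g h, v ≠ (0 : (Fin n → F) × (Fin n → F)) →
      (sWt v : ℚ) ≥ dSymp (Fintype.card F) n f g h := by
  intro v hv hv0
  obtain ⟨a, b, rfl⟩ := hv
  set q := Fintype.card F with hq
  have hq1 : 1 ≤ q := Fintype.card_pos
  have hT1 : dSymp q n f g h ≤ (cycDist n g : ℚ) :=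
    le_trans (min_le_left _ _) (le_trans (min_le_left _ _) (min_le_left _ _))
  have hT3 : dSymp q n f g h
      ≤ (cycDist n (GCDMonoid.lcm f (g / GCDMonoid.gcd g h)) : ℚ) :=
    le_trans (min_le_left _ _) (min_le_right _ _)
  have hT4 : dSymp q n f g h
      ≤ ((cycDist n f : ℚ) + (cycDist n (GCDMonoid.gcd (h * f) g) : ℚ)
          + ((q : ℚ) - 1) * (cycDist n (GCDMonoid.gcd f g) : ℚ)) / (q : ℚ) :=
    min_le_right _ _
  by_cases h1 : vecOf n (a * f) = 0
  · -- first component vanishes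
    have hMaf : (X ^ n - 1 : F[X]) ∣ a * f := (vecOf_eq_zero hn).1 h1
    have hc2 : vecOf n (a * h * f + b * g) = vecOf n (b * g) := by
      apply vecOf_congr hn
      rw [show a * h * f + b * g - b * g = a * f * h from by ring]
      exact hMaf.mul_right h
    have hne : vecOf n (a * h * f + b * g) ≠ 0 := by
      intro hzz
      exact hv0 (Prod.ext h1 hzz)
    have hb2 : cycDist n g ≤ hWt (vecOf n (b * g)) :=
      cycDist_le (dvd_mul_left g b) (by rwa [← hc2])
    apply le_trans hT1
    have : cycDist n g ≤ sWt (vecOf n (a * f), vecOf n (a * h * f + b * g)) := by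
      apply le_trans hb2
      rw [← hc2]
      exact hWt_le_sWt_snd (vecOf n (a * f), vecOf n (a * h * f + b * g))
    exact_mod_cast this
  by_cases h2 : ∃ β : F, vecOf n (a * h * f + b * g) = β • vecOf n (a * f)
  · obtain ⟨β, hβ⟩ := h2
    have hMdvd : (X ^ n - 1 : F[X]) ∣ a * h * f + b * g - C β * (a * f) := by
      apply (vecOf_eq_zero hn).1
      rw [map_sub, ← smul_eq_C_mul, map_smul, hβ]
      simp
    have hgdvd2 : g ∣ a * h * f + b * g - C β * (a * f) := dvd_trans hgdvd hMdvd
    have hgaf : g ∣ (a * f) * (h - C β) := by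
      have h3 : g ∣ a * h * f + b * g - C β * (a * f) - b * g :=
        dvd_sub hgdvd2 (dvd_mul_left g b)
      rwa [show a * h * f + b * g - C β * (a * f) - b * g = (a * f) * (h - C β) from by
        ring] at h3
    rcases eq_or_ne β 0 with rfl | hβ0
    · -- β = 0 : lcm case
      rw [Polynomial.C_0, sub_zero] at hgaf
      set e := GCDMonoid.gcd g h with he
      have hg0 : g ≠ 0 := by
        intro hgz
        rw [hgz] at hgdvd
        have := eq_zero_of_zero_dvd hgdvd
        exact (M_monic (F := F) hn).ne_zero this
      have hene : e ≠ 0 := fun hez => hg0 ((gcd_eq_zero_iff g h).1 hez).1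
      have heg : e ∣ g := gcd_dvd_left g h
      have heh : e ∣ h := gcd_dvd_right g h
      have hge : e * (g / e) = g := EuclideanDomain.mul_div_cancel' hene heg
      have hhe : e * (h / e) = h := EuclideanDomain.mul_div_cancel' hene heh
      have hgcd1 : GCDMonoid.gcd (g / e) (h / e) = 1 := by
        have hmul : GCDMonoid.gcd g h = normalize e * GCDMonoid.gcd (g / e) (h / e) := by
          conv_lhs => rw [← hge, ← hhe]
          exact gcd_mul_left e (g / e) (h / e)
        have hnorm : normalize e = e := by rw [he]; exact _root_.normalize_gcd g h
        rw [hnorm, ← he] at hmul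
        nth_rewrite 1 [← mul_one e] at hmul
        exact (mul_left_cancel₀ hene hmul).symm
      have hco : IsCoprime (g / e) (h / e) := isCoprime_of_gcd_eq_one hgcd1
      have hg1af : g / e ∣ a * f := by
        have hdvd2 : e * (g / e) ∣ e * ((a * f) * (h / e)) := by
          rw [hge]
          have heq2 : (a * f) * h = e * ((a * f) * (h / e)) := by
            linear_combination (-(a * f)) * hhe
          rwa [heq2] at hgaf
        have := (mul_dvd_mul_iff_left hene).1 hdvd2
        exact hco.dvd_of_dvd_mul_right this
      have hlcm : GCDMonoid.lcm f (g / e) ∣ a * f :=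
        lcm_dvd (dvd_mul_left f a) hg1af
      have hble : cycDist n (GCDMonoid.lcm f (g / e)) ≤ hWt (vecOf n (a * f)) :=
        cycDist_le hlcm h1
      apply le_trans hT3
      have : cycDist n (GCDMonoid.lcm f (g / e))
          ≤ sWt (vecOf n (a * f), vecOf n (a * h * f + b * g)) :=
        le_trans hble (hWt_le_sWt_fst (vecOf n (a * f), vecOf n (a * h * f + b * g)))
      exact_mod_cast this
    · -- β ≠ 0 : coprime case
      have hco : IsCoprime (h - C β) g :=
        IsCoprime.of_isCoprime_of_dvd_right (isCoprime_of_gcd_eq_one (hcop β hβ0)) hgdvd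
      have hgaf2 : g ∣ a * f := hco.symm.dvd_of_dvd_mul_right hgaf
      have hble : cycDist n g ≤ hWt (vecOf n (a * f)) := cycDist_le hgaf2 h1
      apply le_trans hT1
      have : cycDist n g ≤ sWt (vecOf n (a * f), vecOf n (a * h * f + b * g)) :=
        le_trans hble (hWt_le_sWt_fst (vecOf n (a * f), vecOf n (a * h * f + b * g)))
      exact_mod_cast this
  · -- general case
    push_neg at h2
    have hkey := count_identity (vecOf n (a * f)) (vecOf n (a * h * f + b * g))
    have hb1 : cycDist n f ≤ hWt (vecOf n (a * f)) :=
      cycDist_le (dvd_mul_left f a) h1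
    have hc2ne : vecOf n (a * h * f + b * g) ≠ 0 := by
      have := h2 0
      simpa using this
    have hb2 : cycDist n (GCDMonoid.gcd (h * f) g) ≤ hWt (vecOf n (a * h * f + b * g)) := by
      apply cycDist_le _ hc2ne
      exact dvd_add (dvd_trans (gcd_dvd_left _ _) ⟨a, by ring⟩)
        (dvd_trans (gcd_dvd_right _ _) (dvd_mul_left g b))
    have hb3 : ∀ β : F, β ≠ 0 →
        cycDist n (GCDMonoid.gcd f g)
          ≤ hWt (vecOf n (a * h * f + b * g) - β • vecOf n (a * f)) := by
      intro β hβ0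
      have heq : vecOf n (a * h * f + b * g) - β • vecOf n (a * f)
          = vecOf n (a * h * f + b * g - C β * (a * f)) := by
        rw [map_sub, ← smul_eq_C_mul, map_smul]
      rw [heq]
      apply cycDist_le
      · apply dvd_sub
        · exact dvd_add (dvd_trans (gcd_dvd_left _ _) ⟨a * h, by ring⟩)
            (dvd_trans (gcd_dvd_right _ _) (dvd_mul_left g b))
        · exact dvd_trans (gcd_dvd_left _ _) ⟨C β * a, by ring⟩
      · rw [← heq]
        exact sub_ne_zero.2 (h2 β)
    have e1 : ∑ β : F, hWt (vecOf n (a * h * f + b * g) - β • vecOf n (a * f))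
        = hWt (vecOf n (a * h * f + b * g))
          + ∑ β ∈ Finset.univ.erase (0 : F),
              hWt (vecOf n (a * h * f + b * g) - β • vecOf n (a * f)) := by
      rw [← Finset.add_sum_erase _ _ (Finset.mem_univ (0 : F)), zero_smul, sub_zero]
    have hsum_ge : (q - 1) * cycDist n (GCDMonoid.gcd f g)
        ≤ ∑ β ∈ Finset.univ.erase (0 : F),
            hWt (vecOf n (a * h * f + b * g) - β • vecOf n (a * f)) := by
      have hle := Finset.card_nsmul_le_sum (Finset.univ.erase (0 : F))
        (fun β => hWt (vecOf n (a * h * f + b * g) - β • vecOf n (a * f)))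
        (cycDist n (GCDMonoid.gcd f g))
        (fun β hβ => hb3 β (Finset.ne_of_mem_erase hβ))
      rwa [Finset.card_erase_of_mem (Finset.mem_univ (0 : F)), Finset.card_univ,
        smul_eq_mul] at hle
    have hN : cycDist n f + cycDist n (GCDMonoid.gcd (h * f) g)
        + (q - 1) * cycDist n (GCDMonoid.gcd f g)
        ≤ q * sWt (vecOf n (a * f), vecOf n (a * h * f + b * g)) := by
      calc cycDist n f + cycDist n (GCDMonoid.gcd (h * f) g)
            + (q - 1) * cycDist n (GCDMonoid.gcd f g)
          ≤ hWt (vecOf n (a * f)) + hWt (vecOf n (a * h * f + b * g))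
            + ∑ β ∈ Finset.univ.erase (0 : F),
                hWt (vecOf n (a * h * f + b * g) - β • vecOf n (a * f)) :=
            add_le_add (add_le_add hb1 hb2) hsum_ge
        _ = q * sWt (vecOf n (a * f), vecOf n (a * h * f + b * g)) := by
            rw [← hkey, e1]; ring
    apply le_trans hT4
    rw [div_le_iff₀ (by exact_mod_cast Fintype.card_pos : (0 : ℚ) < (q : ℚ))]
    have hc : ((q : ℚ) - 1) = ((q - 1 : ℕ) : ℚ) := by
      rw [Nat.cast_sub hq1, Nat.cast_one]
    rw [hc]
    exact_mod_cast hN.trans (le_of_eq (mul_comm q _))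

lemma zero_mem_sDualSet (C : Set ((Fin n → F) × (Fin n → F))) :
    (0 : (Fin n → F) × (Fin n → F)) ∈ sDualSet C := by
  intro y hy
  simp [sInn]

end Aux

/-- under condition (ii), `Q` is symplectic self-orthogonal with the stated
dimension and symplectic weight bound. -/
theorem stmt7 [Fintype F] (n : ℕ) (hn : 0 < n) (f g h : F[X])
    (hf : f.Monic) (hg : g.Monic) (hh : h.Monic)
    (hfd : f.degree < n) (hgd : g.degree < n) (hhd : h.degree < n)
    (hfdvd : f ∣ X ^ n - 1) (hgdvd : g ∣ X ^ n - 1)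
    (hcop : ∀ β : F, β ≠ 0 → GCDMonoid.gcd (h - C β) (X ^ n - 1) = 1)
    (hd1 : f ∣ g) (hd2 : g ∣ perpPoly n g) (hd3 : perpPoly n g ∣ perpPoly n f) :
    sDualSet (QCcode n f g h : Set ((Fin n → F) × (Fin n → F))) ⊆
        (QCcode n f g h : Set ((Fin n → F) × (Fin n → F))) ∧
      Module.finrank F (QCcode n f g h) = 2 * n - f.natDegree - g.natDegree ∧
      ∀ v ∈ QCcode n f g h,
        v ∉ sDualSet (QCcode n f g h : Set ((Fin n → F) × (Fin n → F))) →
        (sWt v : ℚ) ≥ dSymp (Fintype.card F) n f g h := by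
  refine ⟨part1 hn f g h hf hg hfd hgd hhd hfdvd hgdvd hd1 hd2 hd3,
    part2 hn f g h hf hg hfd hgd hfdvd hgdvd, ?_⟩
  intro v hv hnd
  have hv0 : v ≠ 0 := by
    intro h0
    exact hnd (h0 ▸ zero_mem_sDualSet _)
  exact part3 hn f g h hgdvd hcop v hv hv0

end
end

section
/- Let q = p^r and assume the polynomial x^n - 1 in F_q[x] splits in the finite field F_{p^{mr}} with p^{mr} elements. Let s be a positive integer with s < p such that s divides m and gcd(s, r) = 1. Define the polynomial h(x) = (p - s) * tr_{mr/s}(x) + tr_{mr/1}(x) in F_q[x], where tr_{ji/i}(x) := x + x^{p^i} + x^{p^{2i}} + ... + x^{p^{(j-1)i}}. Then for every nonzero beta in F_q, gcd(h(x) + beta, x^n - 1) = 1 in F_q[x]. -/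
open Polynomial Finset

noncomputable section

variable {F : Type*} [Field F] [DecidableEq F]

lemma aux_shift_sum {E : Type*} [AddCommGroup E] (g : ℕ → E) (c : ℕ) (hg : g c = g 0) :
    ∑ k ∈ Finset.range c, g (k + 1) = ∑ k ∈ Finset.range c, g k := by
  have h1 := Finset.sum_range_succ g c
  have h2 := Finset.sum_range_succ' g c
  have h3 := h2.symm.trans h1
  rw [hg] at h3
  exact add_right_cancel h3

lemma aux_fix_mul {E : Type*} [Monoid E] (p k : ℕ) (x : E) (hx : x ^ p ^ k = x) :
    ∀ a, x ^ p ^ (a * k) = x := by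
  intro a
  induction a with
  | zero => simp
  | succ a ih =>
      have : (a + 1) * k = a * k + k := by ring
      rw [this, pow_add, pow_mul, ih, hx]

lemma aux_bezout (s r : ℕ) (hs : 0 < s) (hr : 0 < r) (hsr : Nat.Coprime s r) :
    ∃ a b : ℕ, a * s = 1 + b * r := by
  have ht := Nat.ModEq.pow_totient hsr
  have h1 : 1 ≤ s ^ Nat.totient r := Nat.one_le_pow _ _ hs
  have hd : r ∣ s ^ Nat.totient r - 1 := (Nat.modEq_iff_dvd' h1).mp ht.symm
  obtain ⟨b, hb⟩ := hd
  have hφ : 1 ≤ Nat.totient r := Nat.totient_pos.mpr hr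
  refine ⟨s ^ (Nat.totient r - 1), b, ?_⟩
  have : s ^ (Nat.totient r - 1) * s = s ^ Nat.totient r := by
    rw [← pow_succ, Nat.sub_add_cancel hφ]
  rw [this, mul_comm b r]
  omega

lemma aux_fix_one {E : Type*} [Monoid E] (p : ℕ) (x : E) (hx : x ^ p = x) :
    ∀ a, x ^ p ^ a = x := by
  intro a
  have := aux_fix_mul p 1 x (by simpa using hx) a
  simpa using this

lemma aux_coprime_fix {E : Type*} [Monoid E] (p s r : ℕ) (hs : 0 < s) (hr : 0 < r)
    (hsr : Nat.Coprime s r) (x : E) (hxs : x ^ p ^ s = x) (hxr : x ^ p ^ r = x) :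
    x ^ p = x := by
  obtain ⟨a, b, hab⟩ := aux_bezout s r hs hr hsr
  have h1 : x ^ p ^ (a * s) = x := aux_fix_mul p s x hxs a
  have h2 : x ^ p ^ (b * r) = x := aux_fix_mul p r x hxr b
  rw [hab] at h1
  rw [pow_add, pow_one, mul_comm, pow_mul, h2] at h1
  exact h1

lemma aux_sum_range_mul {E : Type*} [AddCommMonoid E] (f : ℕ → E) (c s : ℕ) :
    ∑ i ∈ Finset.range (c * s), f i
      = ∑ k ∈ Finset.range c, ∑ j ∈ Finset.range s, f (k * s + j) := by
  induction c with
  | zero => simp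
  | succ c ih =>
      rw [Nat.succ_mul, Finset.sum_range_add, ih, Finset.sum_range_succ]

/-- the trace polynomial `h(x) = (p-s) tr_{mr/s}(x) + tr_{mr/1}(x)` satisfies
`gcd(h(x) + β, x^n - 1) = 1` for all nonzero `β`. -/
theorem stmt8 [Fintype F] {E : Type*} [Field E] [Fintype E] [Algebra F E]
    (p r m n : ℕ) (hp : p.Prime) (hr : 0 < r) (hm : 0 < m) (hn : 0 < n)
    (hF : Fintype.card F = p ^ r) (hE : Fintype.card E = p ^ (m * r))
    (hsplit : Polynomial.Splits ((X ^ n - 1 : F[X]).map (algebraMap F E)))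
    (s : ℕ) (hs : 0 < s) (hsp : s < p) (hsm : s ∣ m) (hsr : Nat.Coprime s r)
    (h : F[X])
    (hpoly : h = C ((p - s : ℕ) : F) * (∑ k ∈ Finset.range (m * r / s), X ^ (p ^ (k * s)))
        + ∑ k ∈ Finset.range (m * r), X ^ (p ^ k)) :
    ∀ β : F, β ≠ 0 → GCDMonoid.gcd (h + C β) (X ^ n - 1) = 1 := by
  intro β hβ
  by_contra hgcd
  haveI : Fact p.Prime := ⟨hp⟩
  -- characteristic of E
  have hpE : (p : E) = 0 := by
    have hc : ((Fintype.card E : ℕ) : E) = 0 := FiniteField.cast_card_eq_zero E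
    rw [hE, Nat.cast_pow] at hc
    exact pow_eq_zero_iff (Nat.mul_pos hm hr).ne' |>.mp hc
  haveI hchar : CharP E p := (CharP.charP_iff_prime_eq_zero hp).mpr hpE
  -- find a root of h + C β in E
  have hXn : (X ^ n - 1 : F[X]) ≠ 0 := by
    have : ((X : F[X]) ^ n - C 1).Monic := monic_X_pow_sub_C (1 : F) hn.ne'
    simpa using this.ne_zero
  have hdvd1 : GCDMonoid.gcd (h + C β) (X ^ n - 1) ∣ h + C β := gcd_dvd_left _ _
  have hdvd2 : GCDMonoid.gcd (h + C β) (X ^ n - 1) ∣ X ^ n - 1 := gcd_dvd_right _ _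
  have hdunit : ¬ IsUnit (GCDMonoid.gcd (h + C β) (X ^ n - 1)) := by
    intro hu
    exact hgcd (by rw [← _root_.normalize_gcd, normalize_eq_one.mpr hu])
  have hdsplits : Splits ((GCDMonoid.gcd (h + C β) (X ^ n - 1)).map (algebraMap F E)) :=
    Splits.of_dvd hsplit (Polynomial.map_ne_zero hXn) (Polynomial.map_dvd _ hdvd2)
  have hddeg : (GCDMonoid.gcd (h + C β) (X ^ n - 1)).degree ≠ 0 := fun h0 =>
    hdunit (Polynomial.isUnit_iff_degree_eq_zero.mpr h0)
  obtain ⟨α, hα⟩ := hdsplits.exists_eval_eq_zero (by rwa [Polynomial.degree_map])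
  rw [eval_map] at hα
  have hroot : Polynomial.aeval α (h + C β) = 0 := by
    obtain ⟨k, hk⟩ := hdvd1
    rw [hk, map_mul]
    rw [aeval_def] at *
    rw [hα, zero_mul]
  -- notation
  set c := m * r / s with hc
  have hcs : c * s = m * r := Nat.div_mul_cancel (hsm.mul_right r)
  set T : E := ∑ k ∈ Finset.range c, α ^ p ^ (k * s) with hT
  set S : E := ∑ k ∈ Finset.range (m * r), α ^ p ^ k with hS
  set b : E := algebraMap F E β with hb
  -- the evaluation identity
  have hcast : (algebraMap F E) ((p - s : ℕ) : F) = -(s : E) := by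
    rw [map_natCast, Nat.cast_sub hsp.le, hpE, zero_sub]
  have heval : -(s : E) * T + S + b = 0 := by
    have := hroot
    rw [hpoly] at this
    simp only [map_add, map_mul, aeval_C, map_sum, map_pow, aeval_X] at this
    rw [hcast] at this
    linear_combination this
  have hkey : (s : E) * T = S + b := by linear_combination -heval
  -- frobenius facts
  have hfixE : ∀ x : E, x ^ p ^ (m * r) = x := fun x => by
    rw [← hE]; exact FiniteField.pow_card x
  have hfrob : ∀ j : ℕ, T ^ p ^ j = ∑ k ∈ Finset.range c, α ^ p ^ (k * s + j) := by
    intro j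
    rw [hT, ← iterateFrobenius_def, map_sum]
    refine Finset.sum_congr rfl fun k _ => ?_
    rw [iterateFrobenius_def, ← pow_mul, ← pow_add]
  have hTs : T ^ p ^ s = T := by
    rw [hfrob s]
    have : ∀ k, α ^ p ^ (k * s + s) = α ^ p ^ ((k + 1) * s) := by
      intro k; ring_nf
    rw [Finset.sum_congr rfl fun k _ => this k]
    have := aux_shift_sum (fun k => α ^ p ^ (k * s)) c
      (by show α ^ p ^ (c * s) = α ^ p ^ (0 * s); rw [hcs]; simpa using hfixE α)
    exact this
  have hSsum : S = ∑ j ∈ Finset.range s, T ^ p ^ j := by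
    rw [hS, ← hcs, aux_sum_range_mul (fun i => α ^ p ^ i) c s, Finset.sum_comm]
    exact Finset.sum_congr rfl fun j _ => (hfrob j).symm
  have hSp : S ^ p = S := by
    rw [hSsum, ← frobenius_def, map_sum]
    have h1 : ∀ j, (frobenius E p) (T ^ p ^ j) = T ^ p ^ (j + 1) := by
      intro j; rw [frobenius_def, ← pow_mul, pow_succ]
    rw [Finset.sum_congr rfl fun j _ => h1 j]
    exact aux_shift_sum (fun j => T ^ p ^ j) s (by simpa using hTs)
  have hSpr : S ^ p ^ r = S := aux_fix_one p S hSp r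
  have hbr : b ^ p ^ r = b := by
    rw [hb, ← map_pow, ← hF, FiniteField.pow_card]
  have hcastfix : ∀ k : ℕ, ((s : E)) ^ p ^ k = (s : E) := fun k => by
    rw [← iterateFrobenius_def, map_natCast]
  -- u = sT is fixed by frob^s and frob^r
  have hus : ((s : E) * T) ^ p ^ s = (s : E) * T := by
    rw [mul_pow, hcastfix, hTs]
  have hur : ((s : E) * T) ^ p ^ r = (s : E) * T := by
    rw [hkey, add_pow_char_pow, hSpr, hbr]
  have hup : ((s : E) * T) ^ p = (s : E) * T :=
    aux_coprime_fix p s r hs hr hsr _ hus hur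
  have hsne : (s : E) ≠ 0 := by
    rw [Ne, CharP.cast_eq_zero_iff E p s]
    exact Nat.not_dvd_of_pos_of_lt hs hsp
  have hTp : T ^ p = T := by
    rw [mul_pow] at hup
    have h2 : ((s : E)) ^ p = (s : E) := by simpa using hcastfix 1
    rw [h2] at hup
    exact mul_left_cancel₀ hsne hup
  have hTfix : ∀ j : ℕ, T ^ p ^ j = T := aux_fix_one p T hTp
  have hSfinal : S = (s : E) * T := by
    rw [hSsum, Finset.sum_congr rfl fun j _ => hTfix j, Finset.sum_const,
      Finset.card_range, nsmul_eq_mul]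
  have hb0 : b = 0 := by
    rw [hSfinal] at hkey
    linear_combination -hkey
  exact hβ ((_root_.map_eq_zero (algebraMap F E)).mp hb0)


end
end

section
/- Let p be a prime and m a positive integer not divisible by p, and set n = p^m - 1. Then for every nonzero beta in F_p, the polynomials x^p - x + beta and x^n - 1 are coprime in F_p[x]; equivalently, gcd(x^p - x - beta, x^n - 1) = 1 for all nonzero beta in F_p. -/
open Polynomial Finset

noncomputable section

variable {F : Type*} [Field F] [DecidableEq F]

/-- for `p` prime, `p ∤ m` and `n = p^m - 1`, `x^p - x - β` is coprime with
`x^n - 1` for all nonzero `β` in `F_p`. -/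
theorem stmt11 (p m : ℕ) [Fact p.Prime] (hm : 0 < m) (hpm : ¬ p ∣ m) :
    ∀ β : ZMod p, β ≠ 0 →
      GCDMonoid.gcd ((X : (ZMod p)[X]) ^ p - X - C β) (X ^ (p ^ m - 1) - 1) = 1 := by
  intro β hβ
  have hco : IsCoprime ((X : (ZMod p)[X]) ^ p - X - C β) (X ^ (p ^ m - 1) - 1) := by
    refine (Polynomial.isCoprime_iff_aeval_ne_zero_of_isAlgClosed (k := ZMod p)
      (AlgebraicClosure (ZMod p)) _ _).mpr ?_
    intro α
    by_contra hcon
    push_neg at hcon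
    obtain ⟨h1, h2⟩ := hcon
    haveI : CharP (AlgebraicClosure (ZMod p)) p :=
      charP_of_injective_algebraMap
        (algebraMap (ZMod p) (AlgebraicClosure (ZMod p))).injective p
    obtain hb : (algebraMap (ZMod p) (AlgebraicClosure (ZMod p))) β ≠ 0 := by
      simpa using hβ
    set b : AlgebraicClosure (ZMod p) := algebraMap (ZMod p) (AlgebraicClosure (ZMod p)) β with hbd
    have hfrob : α ^ p = α + b := by
      simp only [map_sub, map_pow, aeval_X, aeval_C, sub_sub, sub_eq_zero] at h1
      rw [h1]; simp [hbd, Polynomial.aeval_C]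
    have hbp : b ^ p = b := by
      rw [hbd, ← map_pow, ZMod.pow_card]
    have key : ∀ k : ℕ, α ^ p ^ k = α + k * b := by
      intro k
      induction k with
      | zero => simp
      | succ k ih =>
        rw [pow_succ, pow_mul, ih, add_pow_char, hfrob, mul_pow, hbp]
        have hk : ((k : AlgebraicClosure (ZMod p))) ^ p = (k : AlgebraicClosure (ZMod p)) := by
          have := map_natCast (frobenius (AlgebraicClosure (ZMod p)) p) k
          rwa [frobenius_def] at this
        rw [hk]
        push_cast
        ring
    have hα : α ^ (p ^ m - 1) = 1 := by
      simpa only [map_sub, map_pow, aeval_X, map_one, sub_eq_zero] using h2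
    have hαm : α ^ p ^ m = α := by
      have hp1 : 1 ≤ p ^ m := Nat.one_le_pow _ _ (Fact.out : p.Prime).pos
      calc α ^ p ^ m = α ^ (p ^ m - 1) * α := by
            rw [← pow_succ, Nat.sub_add_cancel hp1]
        _ = α := by rw [hα, one_mul]
    have hz : ((m : AlgebraicClosure (ZMod p))) * b = 0 := by
      have := key m
      rw [hαm] at this
      linear_combination -this
    have hmK : ((m : AlgebraicClosure (ZMod p))) = 0 := by
      rcases mul_eq_zero.mp hz with h | h
      · exact h
      · exact absurd h hb
    exact hpm ((CharP.cast_eq_zero_iff (AlgebraicClosure (ZMod p)) p m).mp hmK)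
  have := (gcd_isUnit_iff _ _).mpr hco
  rw [← _root_.normalize_gcd]
  exact normalize_eq_one.mpr this

end
end
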